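/- arXiv:2508.06875 — 5 statements merged into one kernel-verified Lean document; each statement's English description precedes it below -/
import Mathlib

section
/- Let σ, ω ∈ Ψ^* with σ_L ⪯ ω_L and σ_y ⪯ ω_y (equivalently, the approximate square of ω is contained in that of σ). Then: (i) if |ω_L| = |σ_L| + 1, then 0 ≤ |ω| − |σ| ≤ A_1; (ii) if |ω_L| − |σ_L| ≥ A_2, then |ω| ≥ |σ| + 1. -/
open Filter MeasureTheory
open scoped BigOperators ENNReal NNReal Topology

namespace LGQ

noncomputable section

/-- The alphabet `G = {(i,j) : 1 ≤ i ≤ n_j, 1 ≤ j ≤ m}`, encoded as a sigma type: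
an element is `⟨j, i⟩` with `j : Fin m` (the `y`-coordinate) and `i : Fin (n j)`. -/
abbrev Alph (m : ℕ) (n : Fin m → ℕ) := Σ j : Fin m, Fin (n j)

/-- A pair `σ = (σ_L, σ_R)` with `σ_L ∈ G^*` and `σ_R ∈ G_y^*`. -/
abbrev Wd (m : ℕ) (n : Fin m → ℕ) := List (Alph m n) × List (Fin m)

variable {m : ℕ} {n : Fin m → ℕ}

/-- `a_ω := ∏ a_{i_h j_h}` along a word `ω ∈ G^*`. -/
def aP (a : Alph m n → ℝ) (w : List (Alph m n)) : ℝ := (w.map a).prod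

/-- `b_τ := ∏ b_{j_h}` along a word `τ ∈ G_y^*`. -/
def bP (b : Fin m → ℝ) (τ : List (Fin m)) : ℝ := (τ.map b).prod

/-- `σ_y := (σ_L)_y ∗ σ_R` : the `y`-word of a pair `σ = σ_L ∗ σ_R`. -/
def sy (σ : Wd m n) : List (Fin m) := σ.1.map Sigma.fst ++ σ.2

/-- `Ψ_l := {σ = σ_L ∗ σ_R : σ_L ∈ G^l, σ_R ∈ G_y^*, b_{(σ_y)^-} ≥ a_{σ_L} > b_{σ_y}}`. -/
def Psi (a : Alph m n → ℝ) (b : Fin m → ℝ) (l : ℕ) : Set (Wd m n) :=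
  {σ | σ.1.length = l ∧ 1 ≤ σ.2.length ∧
    aP a σ.1 ≤ bP b (sy σ).dropLast ∧ bP b (sy σ) < aP a σ.1}

/-- `Ψ^* := ⋃_{l ≥ 1} Ψ_l`. -/
def PsiStar (a : Alph m n → ℝ) (b : Fin m → ℝ) : Set (Wd m n) :=
  {σ | ∃ l, 1 ≤ l ∧ σ ∈ Psi a b l}

/-- `q_j := Σ_{i=1}^{n_j} p_{ij}`. -/
def qf (p : Alph m n → ℝ) (j : Fin m) : ℝ := ∑ i : Fin (n j), p ⟨j, i⟩

/-- `p_{σ_L} := ∏ p_{i_h j_h}`. -/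
def pP (p : Alph m n → ℝ) (w : List (Alph m n)) : ℝ := (w.map p).prod

/-- `q_{σ_R} := ∏ q_{j_h}`. -/
def qP (p : Alph m n → ℝ) (τ : List (Fin m)) : ℝ := (τ.map (qf p)).prod

/-- `E_r(σ) := p_{σ_L} q_{σ_R} a_{σ_L}^r` (note `E_r(θ) = 1`). -/
def Er (a p : Alph m n → ℝ) (r : ℝ) (σ : Wd m n) : ℝ :=
  pP p σ.1 * qP p σ.2 * aP a σ.1 ^ r

/-- `a̲ := min a_{ij}`. -/
def aLo (a : Alph m n → ℝ) : ℝ := ⨅ g, a g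

/-- `ā := max a_{ij}`. -/
def aHi (a : Alph m n → ℝ) : ℝ := ⨆ g, a g

/-- `b̲ := min b_j`. -/
def bLo (b : Fin m → ℝ) : ℝ := ⨅ j, b j

/-- `b̄ := max b_j`. -/
def bHi (b : Fin m → ℝ) : ℝ := ⨆ j, b j

/-- `p̲ := min p_{ij}`. -/
def pLo (p : Alph m n → ℝ) : ℝ := ⨅ g, p g

/-- `q̲ := min q_j`. -/
def qLo (p : Alph m n → ℝ) : ℝ := ⨅ j, qf p j

/-- `A_1 := ⌊log a̲ / log b̄⌋ + 1`. -/
def A1 (a : Alph m n → ℝ) (b : Fin m → ℝ) : ℤ :=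
  ⌊Real.log (aLo a) / Real.log (bHi b)⌋ + 1

/-- `A_2 := ⌊log b̲ / log ā⌋ + 1`. -/
def A2 (a : Alph m n → ℝ) (b : Fin m → ℝ) : ℤ :=
  ⌊Real.log (bLo b) / Real.log (aHi a)⌋ + 1

/-- `A_3 := max_{(i,j)∈G} a_{ij}/b_j`. -/
def A3 (a : Alph m n → ℝ) (b : Fin m → ℝ) : ℝ := ⨆ g : Alph m n, a g / b g.1

/-- `A_4 := log A_3 / log b̲`. -/
def A4 (a : Alph m n → ℝ) (b : Fin m → ℝ) : ℝ := Real.log (A3 a b) / Real.log (bLo b)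

/-- `A_6 := ⌊1/A_4⌋`. -/
def A6 (a : Alph m n → ℝ) (b : Fin m → ℝ) : ℤ := ⌊1 / A4 a b⌋

/-- `η̲_r := p̲ q̲^{A_1} a̲^r`. -/
def etaLo (a : Alph m n → ℝ) (b : Fin m → ℝ) (p : Alph m n → ℝ) (r : ℝ) : ℝ :=
  pLo p * qLo p ^ A1 a b * aLo a ^ r

/-- `A_{5,r} := ⌊log(q̲² η̲_r)/(r·log ā)⌋`. -/
def A5 (a : Alph m n → ℝ) (b : Fin m → ℝ) (p : Alph m n → ℝ) (r : ℝ) : ℤ :=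
  ⌊Real.log (qLo p ^ 2 * etaLo a b p r) / (r * Real.log (aHi a))⌋

/-- `T_{1,r} := ⌊(A_1 + A_{5,r} + 3)/A_4⌋`. -/
def T1 (a : Alph m n → ℝ) (b : Fin m → ℝ) (p : Alph m n → ℝ) (r : ℝ) : ℤ :=
  ⌊((A1 a b + A5 a b p r + 3 : ℤ) : ℝ) / A4 a b⌋

/-- `ρ = σ^♭`:  for `σ ∈ Ψ_1`, `σ^♭ = θ`; for `σ ∈ Ψ_l` with `l ≥ 2`, `σ^♭` is the unique
`ρ ∈ Ψ_{l-1}` with `ρ_L = (σ_L)^-` and `ρ_y` an initial segment of `σ_y`. -/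
def IsFlat (a : Alph m n → ℝ) (b : Fin m → ℝ) (σ ρ : Wd m n) : Prop :=
  (σ.1.length = 1 ∧ ρ = (([], []) : Wd m n)) ∨
  (2 ≤ σ.1.length ∧ ρ ∈ Psi a b (σ.1.length - 1) ∧ ρ.1 = σ.1.dropLast ∧ sy ρ <+: sy σ)

/-- `Λ_{n,r} := {σ ∈ Ψ^* : E_r(σ^♭) ≥ η̲_r^n > E_r(σ)}`. -/
def Lam (a : Alph m n → ℝ) (b : Fin m → ℝ) (p : Alph m n → ℝ) (r : ℝ) (N : ℕ) :
    Set (Wd m n) :=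
  {σ | σ ∈ PsiStar a b ∧ ∃ ρ : Wd m n, IsFlat a b σ ρ ∧
    etaLo a b p r ^ N ≤ Er a p r ρ ∧ Er a p r σ < etaLo a b p r ^ N}

/-- `S_{n,r} := {σ ∈ Ψ^* : η̲_r^{n+1} ≤ E_r(σ) < η̲_r^n}`. -/
def Snr (a : Alph m n → ℝ) (b : Fin m → ℝ) (p : Alph m n → ℝ) (r : ℝ) (N : ℕ) :
    Set (Wd m n) :=
  {σ | σ ∈ PsiStar a b ∧ etaLo a b p r ^ (N + 1) ≤ Er a p r σ ∧
    Er a p r σ < etaLo a b p r ^ N}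

/-- `G_1(σ) := {ω ∈ S_{n,r} : σ_L ⪯ ω_L and σ_y ⪯ ω_y}`. -/
def G1 (a : Alph m n → ℝ) (b : Fin m → ℝ) (p : Alph m n → ℝ) (r : ℝ) (N : ℕ)
    (σ : Wd m n) : Set (Wd m n) :=
  {ω | ω ∈ Snr a b p r N ∧ σ.1 <+: ω.1 ∧ sy σ <+: sy ω}

/-- `Λ_h(σ) := {ρ ∈ Φ_{l+h} : σ ⪯ ρ}` (componentwise order on pairs). -/
def LamH (a : Alph m n → ℝ) (b : Fin m → ℝ) (σ : Wd m n) (h : ℕ) : Set (Wd m n) :=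
  {ρ | ρ ∈ Psi a b (σ.1.length + h) ∧ σ.1 <+: ρ.1 ∧ σ.2 <+: ρ.2}

/-- `I_{k,r}(t) := Σ_{ω∈Φ_k} E_r(ω)^t`. -/
def Ih (a : Alph m n → ℝ) (b : Fin m → ℝ) (p : Alph m n → ℝ) (r : ℝ) (k : ℕ) (t : ℝ) : ℝ :=
  ∑' ω : Psi a b k, Er a p r ω.1 ^ t

/-- `Υ_n(t,s) := Σ_{σ∈Ψ_n} (p_{σ_L} q_{σ_R})^t a_{σ_L}^s`. -/
def Ups (a : Alph m n → ℝ) (b : Fin m → ℝ) (p : Alph m n → ℝ) (N : ℕ) (t s : ℝ) : ℝ :=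
  ∑' σ : Psi a b N, (pP p σ.1.1 * qP p σ.1.2) ^ t * aP a σ.1.1 ^ s

/-- `τ_0 := ((1,j_0),(n_{j_0},j_0))`. -/
def tau0 (j0 : Fin m) (h : 2 ≤ n j0) : List (Alph m n) :=
  [⟨j0, ⟨0, by omega⟩⟩, ⟨j0, ⟨n j0 - 1, by omega⟩⟩]

/-- `σ̄` is a bar-extension of `σ ∈ Ψ_l`: `σ̄ ∈ Ψ_{l+2}`, `σ̄_L = σ_L ∗ τ_0`, `σ_R ⪯ σ̄_R`. -/
def BarExt (a : Alph m n → ℝ) (b : Fin m → ℝ) (j0 : Fin m) (h : 2 ≤ n j0)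
    (σ σb : Wd m n) : Prop :=
  σb ∈ Psi a b (σ.1.length + 2) ∧ σb.1 = σ.1 ++ tau0 j0 h ∧ σ.2 <+: σb.2

/-- cylinder set `[σ] ⊆ Φ_∞ = G^ℕ × G_y^ℕ`. -/
def Cyl (σ : Wd m n) : Set ((ℕ → Alph m n) × (ℕ → Fin m)) :=
  {x | (∀ i : ℕ, ∀ hi : i < σ.1.length, x.1 i = σ.1.get ⟨i, hi⟩) ∧
       (∀ i : ℕ, ∀ hi : i < σ.2.length, x.2 i = σ.2.get ⟨i, hi⟩)}

/-- the affine map `f_{ij}(x,y) = (a_{ij} x + c_{ij}, b_j y + d_j)`. -/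
def fmap (a : Alph m n → ℝ) (b : Fin m → ℝ) (c : Alph m n → ℝ) (d : Fin m → ℝ)
    (g : Alph m n) : ℝ × ℝ → ℝ × ℝ :=
  fun x => (a g * x.1 + c g, b g.1 * x.2 + d g.1)

/-- `A_{L,σ} = c_{i_1j_1} + Σ_{p≥2} (∏_{h<p} a_{i_hj_h}) c_{i_pj_p}`. -/
def xL (a c : Alph m n → ℝ) : List (Alph m n) → ℝ
  | [] => 0
  | g :: w => c g + a g * xL a c w

/-- `B_{L,σ} = d_{j_1} + Σ_{p≥2} (∏_{h<p} b_{j_h}) d_{j_p}`. -/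
def yL (b d : Fin m → ℝ) : List (Fin m) → ℝ
  | [] => 0
  | j :: τ => d j + b j * yL b d τ

/-- the approximate square `F_σ = [A_{L,σ}, A_{L,σ}+a_{σ_L}] × [B_{L,σ}, B_{L,σ}+b_{σ_y}]`. -/
def Fsq (a c : Alph m n → ℝ) (b d : Fin m → ℝ) (σ : Wd m n) : Set (ℝ × ℝ) :=
  Set.Icc (xL a c σ.1) (xL a c σ.1 + aP a σ.1) ×ˢ
    Set.Icc (yL b d (sy σ)) (yL b d (sy σ) + bP b (sy σ))

/-- the Euclidean distance on `ℝ²`. -/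
def eudist (x y : ℝ × ℝ) : ℝ := Real.sqrt ((x.1 - y.1) ^ 2 + (x.2 - y.2) ^ 2)

/-- the horizontal distance `d_h(S,T) = inf{|x-x'| : (x,y)∈S, (x',y')∈T}`. -/
def dH (S T : Set (ℝ × ℝ)) : ℝ := sInf {e | ∃ x ∈ S, ∃ y ∈ T, e = |x.1 - y.1|}

/-- the (Euclidean) diameter of a subset of `ℝ²`. -/
def euDiam (S : Set (ℝ × ℝ)) : ℝ := sSup {e | ∃ x ∈ S, ∃ y ∈ S, e = eudist x y}

/-- the `N`-th quantization error of order `r`. -/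
def qerr (μ : Measure (ℝ × ℝ)) (r : ℝ) (N : ℕ) : ℝ :=
  sInf {e : ℝ | ∃ α : Finset (ℝ × ℝ), ∃ hα : α.Nonempty, α.card ≤ N ∧
    e = (∫ x, α.inf' hα (fun y => eudist x y ^ r) ∂μ) ^ (1 / r)}

/-- the topological support of a measure on `ℝ²`. -/
def suppSet (μ : Measure (ℝ × ℝ)) : Set (ℝ × ℝ) :=
  {x | ∀ U : Set (ℝ × ℝ), IsOpen U → x ∈ U → μ U ≠ 0}

/-- the dyadic square `[k 2^{-N}, (k+1) 2^{-N}) × [k' 2^{-N}, (k'+1) 2^{-N})`. -/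
def Dy (N : ℕ) (k : ℤ × ℤ) : Set (ℝ × ℝ) :=
  Set.Ico ((k.1 : ℝ) * (2 : ℝ) ^ (-(N : ℤ))) (((k.1 : ℝ) + 1) * (2 : ℝ) ^ (-(N : ℤ))) ×ˢ
    Set.Ico ((k.2 : ℝ) * (2 : ℝ) ^ (-(N : ℤ))) (((k.2 : ℝ) + 1) * (2 : ℝ) ^ (-(N : ℤ)))


private lemma listProd_pos {α : Type*} {f : α → ℝ} (h : ∀ x, 0 < f x) (l : List α) :
    0 < (l.map f).prod := by
  induction l with
  | nil => simp
  | cons x l ih => simpa using mul_pos (h x) ih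

private lemma listProd_le_pow {α : Type*} {f : α → ℝ} {B : ℝ} (h0 : ∀ x, 0 < f x)
    (hB : ∀ x, f x ≤ B) (l : List α) : (l.map f).prod ≤ B ^ l.length := by
  induction l with
  | nil => simp
  | cons x l ih =>
    have hB0 : 0 ≤ B := (h0 x).le.trans (hB x)
    simp only [List.map_cons, List.prod_cons, List.length_cons, pow_succ']
    exact mul_le_mul (hB x) ih (listProd_pos h0 l).le hB0

theorem stmt3
    (m : ℕ) (hm : 2 ≤ m) (n : Fin m → ℕ) (hn : ∀ j, 1 ≤ n j)
    (a : Alph m n → ℝ) (b : Fin m → ℝ)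
    (hab : ∀ g : Alph m n, 0 < a g ∧ a g < b g.1 ∧ b g.1 < 1)
    (σ ω : Wd m n) (hσ : σ ∈ PsiStar a b) (hω : ω ∈ PsiStar a b)
    (hL : σ.1 <+: ω.1) (hy : sy σ <+: sy ω) :
    (ω.1.length = σ.1.length + 1 →
      σ.1.length + σ.2.length ≤ ω.1.length + ω.2.length ∧
      (ω.1.length + ω.2.length : ℤ) - (σ.1.length + σ.2.length : ℤ) ≤ A1 a b) ∧
    (A2 a b ≤ (ω.1.length : ℤ) - (σ.1.length : ℤ) →
      σ.1.length + σ.2.length + 1 ≤ ω.1.length + ω.2.length) := by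
  -- basic positivity facts
  have hNE : Nonempty (Alph m n) := ⟨⟨⟨0, by omega⟩, ⟨0, hn _⟩⟩⟩
  haveI hNEm : Nonempty (Fin m) := ⟨⟨0, by omega⟩⟩
  have ha_pos : ∀ g, 0 < a g := fun g => (hab g).1
  have hb_pos : ∀ j, 0 < b j := fun j =>
    lt_trans (ha_pos ⟨j, ⟨0, hn j⟩⟩) (hab ⟨j, ⟨0, hn j⟩⟩).2.1
  have hb_lt1 : ∀ j, b j < 1 := fun j => (hab ⟨j, ⟨0, hn j⟩⟩).2.2
  have ha_lt1 : ∀ g, a g < 1 := fun g => lt_trans (hab g).2.1 (hab g).2.2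
  -- extremal quantities
  have haLo_le : ∀ g, aLo a ≤ a g := fun g => ciInf_le (Set.finite_range a).bddBelow g
  have haLo_pos : 0 < aLo a := by
    obtain ⟨g, hg⟩ := exists_eq_ciInf_of_finite (f := a)
    rw [aLo, ← hg]; exact ha_pos g
  have haLo_lt1 : aLo a < 1 := lt_of_le_of_lt (haLo_le hNE.some) (ha_lt1 hNE.some)
  have hbLo_le : ∀ j, bLo b ≤ b j := fun j => ciInf_le (Set.finite_range b).bddBelow j
  have hbLo_pos : 0 < bLo b := by
    obtain ⟨j, hj⟩ := exists_eq_ciInf_of_finite (f := b)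
    rw [bLo, ← hj]; exact hb_pos j
  have hbLo_lt1 : bLo b < 1 :=
    lt_of_le_of_lt (hbLo_le ⟨0, by omega⟩) (hb_lt1 ⟨0, by omega⟩)
  have hle_aHi : ∀ g, a g ≤ aHi a := fun g => le_ciSup (Set.finite_range a).bddAbove g
  have haHi_pos : 0 < aHi a := lt_of_lt_of_le (ha_pos hNE.some) (hle_aHi hNE.some)
  have haHi_lt1 : aHi a < 1 := by
    obtain ⟨g, hg⟩ := exists_eq_ciSup_of_finite (f := a)
    rw [aHi, ← hg]; exact ha_lt1 g
  have hle_bHi : ∀ j, b j ≤ bHi b := fun j => le_ciSup (Set.finite_range b).bddAbove j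
  have hbHi_pos : 0 < bHi b :=
    lt_of_lt_of_le (hb_pos ⟨0, by omega⟩) (hle_bHi ⟨0, by omega⟩)
  have hbHi_lt1 : bHi b < 1 := by
    obtain ⟨j, hj⟩ := exists_eq_ciSup_of_finite (f := b)
    rw [bHi, ← hj]; exact hb_lt1 j
  have hlogbHi : Real.log (bHi b) < 0 := Real.log_neg hbHi_pos hbHi_lt1
  have hlogaHi : Real.log (aHi a) < 0 := Real.log_neg haHi_pos haHi_lt1
  have hlogaLo : Real.log (aLo a) < 0 := Real.log_neg haLo_pos haLo_lt1
  have hlogbLo : Real.log (bLo b) < 0 := Real.log_neg hbLo_pos hbLo_lt1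
  -- unpack Psi memberships
  obtain ⟨lσ, hlσ, hσ1, hσ2, hσle, hσlt⟩ := hσ
  obtain ⟨lω, hlω, hω1, hω2, hωle, hωlt⟩ := hω
  -- decompositions
  obtain ⟨ρ, hρ⟩ := hy
  obtain ⟨ext, hext⟩ := hL
  have hlen_eq : σ.1.length + σ.2.length + ρ.length = ω.1.length + ω.2.length := by
    have h := congrArg List.length hρ
    simp [sy] at h
    omega
  have hσ_len_le : σ.1.length + σ.2.length ≤ ω.1.length + ω.2.length := by omega
  have haPσ_pos : 0 < aP a σ.1 := listProd_pos ha_pos _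
  have hbPσ_pos : 0 < bP b (sy σ) := listProd_pos hb_pos _
  have hsyσ_ne : sy σ ≠ [] := by
    refine List.length_pos_iff.mp ?_
    simp only [sy, List.length_append, List.length_map]
    omega
  constructor
  · -- part (i)
    intro hlen
    refine ⟨hσ_len_le, ?_⟩
    have hextlen : ext.length = 1 := by
      have := congrArg List.length hext
      simp at this; omega
    obtain ⟨g, rfl⟩ := List.length_eq_one_iff.mp hextlen
    -- reduce to bound on t := ρ.length
    suffices h : (ρ.length : ℤ) ≤ A1 a b by omega
    rcases Nat.eq_zero_or_pos ρ.length with ht0 | ht1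
    · rw [ht0]
      have : (0 : ℤ) ≤ ⌊Real.log (aLo a) / Real.log (bHi b)⌋ := by
        rw [Int.le_floor]
        push_cast
        rw [← neg_div_neg_eq]
        exact div_nonneg (by linarith) (by linarith)
      unfold A1; omega
    · have hρne : ρ ≠ [] := by intro h; simp [h] at ht1
      -- key chain: aLo a < bHi b ^ (ρ.length - 1)
      have hchain : aLo a * bP b (sy σ) < bP b (sy σ) * bHi b ^ (ρ.length - 1) := by
        have h1 : aLo a * bP b (sy σ) < aLo a * aP a σ.1 :=
          mul_lt_mul_of_pos_left hσlt haLo_pos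
        have h2 : aLo a * aP a σ.1 ≤ aP a ω.1 := by
          rw [← hext]
          have : aP a (σ.1 ++ [g]) = a g * aP a σ.1 := by
            simp [aP, mul_comm]
          rw [this]
          exact mul_le_mul_of_nonneg_right (haLo_le g) haPσ_pos.le
        have h4 : aP a ω.1 ≤ bP b (sy ω).dropLast := hωle
        have h5 : (sy ω).dropLast = sy σ ++ ρ.dropLast := by
          rw [← hρ]; exact List.dropLast_append_of_ne_nil hρne
        have h6 : bP b (sy σ ++ ρ.dropLast) = bP b (sy σ) * bP b ρ.dropLast := by
          simp [bP]
        have h7 : bP b ρ.dropLast ≤ bHi b ^ (ρ.length - 1) := by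
          have := listProd_le_pow hb_pos hle_bHi ρ.dropLast
          rwa [List.length_dropLast] at this
        calc aLo a * bP b (sy σ) < aP a ω.1 := lt_of_lt_of_le h1 h2
          _ ≤ bP b (sy σ) * bP b ρ.dropLast := by rw [← h6, ← h5]; exact h4
          _ ≤ bP b (sy σ) * bHi b ^ (ρ.length - 1) :=
            mul_le_mul_of_nonneg_left h7 hbPσ_pos.le
      have hkey : aLo a < bHi b ^ (ρ.length - 1) := by
        rw [mul_comm (aLo a)] at hchain
        exact lt_of_mul_lt_mul_left hchain hbPσ_pos.le
      have hlog : Real.log (aLo a) < ((ρ.length : ℝ) - 1) * Real.log (bHi b) := by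
        have := Real.log_lt_log haLo_pos hkey
        rw [Real.log_pow] at this
        have hc : ((ρ.length - 1 : ℕ) : ℝ) = (ρ.length : ℝ) - 1 := by
          push_cast [Nat.cast_sub ht1]; ring
        rwa [hc] at this
      have : ((ρ.length : ℝ) - 1) < Real.log (aLo a) / Real.log (bHi b) :=
        (lt_div_iff_of_neg hlogbHi).mpr hlog
      have hfl : (ρ.length : ℤ) - 1 ≤ ⌊Real.log (aLo a) / Real.log (bHi b)⌋ := by
        rw [Int.le_floor]; push_cast; linarith
      unfold A1; omega
  · -- part (ii)
    intro hA2
    by_contra hcon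
    push_neg at hcon
    have ht0 : ρ.length = 0 := by omega
    have hρnil : ρ = [] := List.length_eq_zero_iff.mp ht0
    have hsy_eq : sy ω = sy σ := by rw [← hρ, hρnil, List.append_nil]
    -- s := ext.length
    have hslen : σ.1.length + ext.length = ω.1.length := by
      have := congrArg List.length hext; simpa using this
    have hA2s : A2 a b ≤ (ext.length : ℤ) := by omega
    -- last element of sy σ
    have hlast := List.dropLast_append_getLast hsyσ_ne
    set j0 := (sy σ).getLast hsyσ_ne with hj0
    have hbPd_pos : 0 < bP b (sy σ).dropLast := listProd_pos hb_pos _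
    have hsplit : bP b (sy σ) = bP b (sy σ).dropLast * b j0 := by
      conv_lhs => rw [← hlast]
      simp [bP]
    have hchain : bP b (sy σ).dropLast * b j0 < bP b (sy σ).dropLast * aHi a ^ ext.length := by
      calc bP b (sy σ).dropLast * b j0 = bP b (sy σ) := hsplit.symm
        _ < aP a ω.1 := by rw [hsy_eq] at hωlt; exact hωlt
        _ = aP a σ.1 * aP a ext := by rw [← hext]; simp [aP]
        _ ≤ bP b (sy σ).dropLast * aHi a ^ ext.length :=
          mul_le_mul hσle (listProd_le_pow ha_pos hle_aHi ext)
            (listProd_pos ha_pos ext).le hbPd_pos.le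
    have hkey : b j0 < aHi a ^ ext.length :=
      lt_of_mul_lt_mul_left hchain hbPd_pos.le
    have hkey2 : bLo b < aHi a ^ ext.length := lt_of_le_of_lt (hbLo_le j0) hkey
    have hlog : Real.log (bLo b) < (ext.length : ℝ) * Real.log (aHi a) := by
      have := Real.log_lt_log hbLo_pos hkey2
      rwa [Real.log_pow] at this
    have : (ext.length : ℝ) < Real.log (bLo b) / Real.log (aHi a) :=
      (lt_div_iff_of_neg hlogaHi).mpr hlog
    have hfl : (ext.length : ℤ) ≤ ⌊Real.log (bLo b) / Real.log (aHi a)⌋ := by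
      rw [Int.le_floor]; push_cast; linarith
    unfold A2 at hA2s; omega

end

end LGQ
end

section
/- Assume n_j = 1 for every j ∈ G_y. If σ, ω ∈ Ψ^* are such that σ_y and ω_y are comparable, then either (σ_L ⪯ ω_L and σ_y ⪯ ω_y) or (ω_L ⪯ σ_L and ω_y ⪯ σ_y); i.e., one of the corresponding approximate squares contains the other. -/
open Filter MeasureTheory
open scoped BigOperators ENNReal NNReal Topology

namespace LGQ

noncomputable section

variable {m : ℕ} {n : Fin m → ℕ}

lemma list_prod_pos' {α : Type*} (f : α → ℝ) (h0 : ∀ x, 0 < f x) (w : List α) :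
    0 < (w.map f).prod := by
  induction w with
  | nil => simp
  | cons x t ih => rw [List.map_cons, List.prod_cons]; exact mul_pos (h0 x) ih

lemma list_prod_le_one' {α : Type*} (f : α → ℝ) (h0 : ∀ x, 0 < f x) (h1 : ∀ x, f x ≤ 1)
    (w : List α) : (w.map f).prod ≤ 1 := by
  induction w with
  | nil => simp
  | cons x t ih =>
    rw [List.map_cons, List.prod_cons]
    nlinarith [h0 x, h1 x, list_prod_pos' f h0 t]

lemma prod_prefix_le' {α : Type*} (f : α → ℝ) (h0 : ∀ x, 0 < f x) (h1 : ∀ x, f x ≤ 1)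
    {u v : List α} (h : u <+: v) : (v.map f).prod ≤ (u.map f).prod := by
  obtain ⟨t, rfl⟩ := h
  rw [List.map_append, List.prod_append]
  nlinarith [list_prod_pos' f h0 u, list_prod_le_one' f h0 h1 t]

lemma fst_prefix_lift {m : ℕ} {n : Fin m → ℕ} (h1 : ∀ j : Fin m, n j = 1)
    {u v : List (Alph m n)} (h : u.map Sigma.fst <+: v.map Sigma.fst) : u <+: v := by
  have lift_eq : ∀ w : List (Alph m n),
      (w.map Sigma.fst).map (fun j : Fin m => (⟨j, ⟨0, by rw [h1]; omega⟩⟩ : Alph m n)) = w := by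
    intro w
    induction w with
    | nil => rfl
    | cons g t ih =>
      obtain ⟨j, i⟩ := g
      have hi : i = ⟨0, by rw [h1]; omega⟩ := Fin.ext (by
        have h2 := h1 j; have h3 := i.isLt; simp; omega)
      simp only [List.map_cons, ih]
      rw [hi]
  have := h.map (fun j : Fin m => (⟨j, ⟨0, by rw [h1]; omega⟩⟩ : Alph m n))
  rwa [lift_eq, lift_eq] at this

lemma prefix_dropLast {α : Type*} {u v : List α} (h : u <+: v) (hl : u.length + 1 ≤ v.length) :
    u <+: v.dropLast := by
  obtain ⟨t, rfl⟩ := h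
  have ht : t ≠ [] := by
    intro hh
    simp [hh] at hl
  rw [List.dropLast_append_of_ne_nil ht]
  exact ⟨t.dropLast, rfl⟩

lemma key_lemma
    {m : ℕ} {n : Fin m → ℕ}
    (a : Alph m n → ℝ) (b : Fin m → ℝ)
    (hab : ∀ g : Alph m n, 0 < a g ∧ a g < b g.1 ∧ b g.1 < 1)
    (h1 : ∀ j : Fin m, n j = 1)
    (σ ω : Wd m n) (hσ : σ ∈ PsiStar a b) (hω : ω ∈ PsiStar a b)
    (hy : sy σ <+: sy ω) :
    (σ.1 <+: ω.1 ∧ sy σ <+: sy ω) ∨ (ω.1 <+: σ.1 ∧ sy ω <+: sy σ) := by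
  have ha0 : ∀ g, 0 < a g := fun g => (hab g).1
  have ha1 : ∀ g, a g ≤ 1 := fun g => le_of_lt ((hab g).2.1.trans (hab g).2.2)
  have hb0 : ∀ j, 0 < b j := fun j => lt_trans (ha0 ⟨j, ⟨0, by rw [h1]; omega⟩⟩)
    ((hab ⟨j, ⟨0, by rw [h1]; omega⟩⟩).2.1)
  have hb1 : ∀ j, b j ≤ 1 := fun j => le_of_lt (hab ⟨j, ⟨0, by rw [h1]; omega⟩⟩).2.2
  obtain ⟨l, hl1, hlenσ, hs2σ, hleσ, hltσ⟩ := hσ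
  obtain ⟨l', hl1', hlenω, hs2ω, hleω, hltω⟩ := hω
  -- prefixes of sy
  have hpσ : σ.1.map Sigma.fst <+: sy σ := ⟨σ.2, rfl⟩
  have hpω : ω.1.map Sigma.fst <+: sy ω := ⟨ω.2, rfl⟩
  by_cases hll : σ.1.length ≤ ω.1.length
  · left
    refine ⟨fst_prefix_lift h1 ?_, hy⟩
    exact List.prefix_of_prefix_length_le (hpσ.trans hy) hpω (by simpa using hll)
  · push_neg at hll
    have hwp : ω.1 <+: σ.1 :=
      fst_prefix_lift h1
        (List.prefix_of_prefix_length_le hpω (hpσ.trans hy) (by simp; omega))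
    by_cases hleneq : (sy σ).length = (sy ω).length
    · right
      exact ⟨hwp, (hy.eq_of_length hleneq) ▸ List.prefix_refl _⟩
    · exfalso
      have hlt2 : (sy σ).length + 1 ≤ (sy ω).length :=
        lt_of_le_of_ne hy.length_le hleneq
      have hdp : sy σ <+: (sy ω).dropLast := prefix_dropLast hy hlt2
      have e1 : aP a σ.1 ≤ aP a ω.1 := prod_prefix_le' a ha0 ha1 hwp
      have e2 : bP b ((sy ω).dropLast) ≤ bP b (sy σ) := prod_prefix_le' b hb0 hb1 hdp
      have := hltσ  -- bP b (sy σ) < aP a σ.1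
      have := hleω -- aP a ω.1 ≤ bP b (sy ω).dropLast
      simp only [aP, bP] at *
      linarith

theorem stmt5
    (m : ℕ) (hm : 2 ≤ m) (n : Fin m → ℕ) (hn : ∀ j, 1 ≤ n j)
    (a : Alph m n → ℝ) (b : Fin m → ℝ)
    (hab : ∀ g : Alph m n, 0 < a g ∧ a g < b g.1 ∧ b g.1 < 1)
    (h1 : ∀ j : Fin m, n j = 1)
    (σ ω : Wd m n) (hσ : σ ∈ PsiStar a b) (hω : ω ∈ PsiStar a b)
    (hy : sy σ <+: sy ω ∨ sy ω <+: sy σ) :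
    (σ.1 <+: ω.1 ∧ sy σ <+: sy ω) ∨ (ω.1 <+: σ.1 ∧ sy ω <+: sy σ) := by
  rcases hy with h | h
  · exact key_lemma a b hab h1 σ ω hσ hω h
  · exact (key_lemma a b hab h1 ω σ hω hσ h).symm

end

end LGQ
end

section
/- Assume n_{j_0} ≥ 2 for some j_0 ∈ G_y and put τ_0 := ((1,j_0),(n_{j_0},j_0)). Let n ≥ 4/A_4 and let σ, ω ∈ Λ_{n,r} be distinct with σ_L ⪯ ω_L and |ω_L| − |σ_L| ≤ 2. Then for any bar-extensions σ̄ of σ and ω̄ of ω, the words σ̄_y and ω̄_y are incomparable. -/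
open Filter MeasureTheory
open scoped BigOperators ENNReal NNReal Topology

namespace LGQ

noncomputable section

variable {m : ℕ} {n : Fin m → ℕ}

/- ------------------------------------------------------------------ -/
/- Auxiliary lemmas for `stmt7`.                                       -/
/- ------------------------------------------------------------------ -/

private lemma lgq_mapProd_pos {α : Type*} {f : α → ℝ} (hf : ∀ x, 0 < f x) (w : List α) :
    0 < (w.map f).prod := by
  refine List.prod_pos ?_
  intro x hx
  obtain ⟨g, -, rfl⟩ := List.mem_map.1 hx
  exact hf g

private lemma lgq_mapProd_le_one {α : Type*} {f : α → ℝ} (hf0 : ∀ x, 0 ≤ f x)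
    (hf1 : ∀ x, f x ≤ 1) (w : List α) : (w.map f).prod ≤ 1 := by
  induction w with
  | nil => simp
  | cons x w ih =>
    simp only [List.map_cons, List.prod_cons]
    have h0 : 0 ≤ (w.map f).prod := by
      refine List.prod_nonneg ?_
      intro y hy
      obtain ⟨g, -, rfl⟩ := List.mem_map.1 hy
      exact hf0 g
    nlinarith [hf0 x, hf1 x]

private lemma lgq_prefix_dropLast {α : Type*} {X Y : List α} (h : X <+: Y) (hne : X ≠ Y) :
    X <+: Y.dropLast := by
  obtain ⟨s, rfl⟩ := h
  rcases s with _ | ⟨x, s⟩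
  · simp at hne
  · rw [List.dropLast_append_cons]
    exact List.prefix_append _ _

private lemma lgq_prefix_cancel {α : Type*} {X A B : List α} (h : X ++ A <+: X ++ B) :
    A <+: B := by
  obtain ⟨s, hs⟩ := h
  rw [List.append_assoc] at hs
  exact ⟨s, List.append_cancel_left hs⟩

private lemma lgq_prefix_append_left {α : Type*} (X : List α) {A B : List α} (h : A <+: B) :
    X ++ A <+: X ++ B := by
  obtain ⟨s, rfl⟩ := h
  exact ⟨s, by rw [List.append_assoc]⟩

private lemma lgq_comp_of_prefix {α : Type*} {P Q X Y : List α} (hX : P <+: X) (hY : Q <+: Y)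
    (h : X <+: Y ∨ Y <+: X) : P <+: Q ∨ Q <+: P := by
  rcases h with h | h
  · exact List.prefix_or_prefix_of_prefix (hX.trans h) hY
  · exact List.prefix_or_prefix_of_prefix hX (hY.trans h)

private lemma lgq_comp_cons {α : Type*} {x y : α} {A B : List α}
    (h : x :: A <+: y :: B ∨ y :: B <+: x :: A) : x = y ∧ (A <+: B ∨ B <+: A) := by
  rcases h with h | h
  · rw [List.cons_prefix_cons] at h
    exact ⟨h.1, Or.inl h.2⟩
  · rw [List.cons_prefix_cons] at h
    exact ⟨h.1.symm, Or.inr h.2⟩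

private lemma lgq_pP_le_qP (p : Alph m n → ℝ) (hp : ∀ g, 0 < p g) (w : List (Alph m n)) :
    pP p w ≤ qP p (w.map Sigma.fst) := by
  induction w with
  | nil => simp [pP, qP]
  | cons g w ih =>
    simp only [pP, qP, List.map_cons, List.prod_cons] at ih ⊢
    have h1 : p g ≤ qf p g.1 := by
      have h2 : p ⟨g.1, g.2⟩ ≤ ∑ i : Fin (n g.1), p ⟨g.1, i⟩ :=
        Finset.single_le_sum (fun i _ => (hp _).le) (Finset.mem_univ g.2)
      simpa [qf] using h2
    have h3 : 0 < (w.map p).prod := lgq_mapProd_pos hp w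
    exact mul_le_mul h1 ih h3.le (le_trans (hp g).le h1)

theorem stmt7
    (m : ℕ) (hm : 2 ≤ m) (n : Fin m → ℕ) (hn : ∀ j, 1 ≤ n j)
    (a : Alph m n → ℝ) (b : Fin m → ℝ)
    (hab : ∀ g : Alph m n, 0 < a g ∧ a g < b g.1 ∧ b g.1 < 1)
    (p : Alph m n → ℝ) (hp : ∀ g, 0 < p g) (hp1 : ∑ g : Alph m n, p g = 1)
    (r : ℝ) (hr : 0 < r)
    (j0 : Fin m) (hj0 : 2 ≤ n j0)
    (N : ℕ) (hN : 4 / A4 a b ≤ (N : ℝ))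
    (σ ω : Wd m n) (hσ : σ ∈ Lam a b p r N) (hω : ω ∈ Lam a b p r N)
    (hne : σ ≠ ω) (hL : σ.1 <+: ω.1) (hlen : ω.1.length ≤ σ.1.length + 2)
    (σb ωb : Wd m n) (hσb : BarExt a b j0 hj0 σ σb) (hωb : BarExt a b j0 hj0 ω ωb) :
    ¬ sy σb <+: sy ωb ∧ ¬ sy ωb <+: sy σb := by
  -- basic positivity and bounds
  have ha0 : ∀ g, 0 < a g := fun g => (hab g).1
  have ha1 : ∀ g, a g ≤ 1 := fun g => ((hab g).2.1.trans (hab g).2.2).le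
  have hb0 : ∀ j, 0 < b j := fun j =>
    lt_trans (hab ⟨j, ⟨0, hn j⟩⟩).1 (hab ⟨j, ⟨0, hn j⟩⟩).2.1
  have hb1 : ∀ j, b j ≤ 1 := fun j => (hab ⟨j, ⟨0, hn j⟩⟩).2.2.le
  have aPpos : ∀ w, 0 < aP a w := fun w => lgq_mapProd_pos ha0 w
  have aPle1 : ∀ w, aP a w ≤ 1 := fun w => lgq_mapProd_le_one (fun g => (ha0 g).le) ha1 w
  have bPpos : ∀ τ, 0 < bP b τ := fun τ => lgq_mapProd_pos hb0 τ
  have bPle1 : ∀ τ, bP b τ ≤ 1 := fun τ => lgq_mapProd_le_one (fun j => (hb0 j).le) hb1 τ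
  have pPpos : ∀ w, 0 < pP p w := fun w => lgq_mapProd_pos hp w
  have hq0 : ∀ j, 0 < qf p j := by
    intro j
    have : Nonempty (Fin (n j)) := ⟨⟨0, hn j⟩⟩
    simp only [qf]
    exact Finset.sum_pos (fun i _ => hp _) Finset.univ_nonempty
  have hq1 : ∀ j, qf p j ≤ 1 := by
    intro j
    have hsum : ∑ j' : Fin m, qf p j' = 1 := by
      calc ∑ j' : Fin m, qf p j' = ∑ g : Alph m n, p g := by
            simp only [qf]
            rw [← Finset.sum_sigma]
            rfl
        _ = 1 := hp1
    calc qf p j ≤ ∑ j' : Fin m, qf p j' :=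
          Finset.single_le_sum (fun j' _ => (hq0 j').le) (Finset.mem_univ j)
      _ = 1 := hsum
  have qPpos : ∀ τ, 0 < qP p τ := fun τ => lgq_mapProd_pos hq0 τ
  have qPle1 : ∀ τ, qP p τ ≤ 1 := fun τ => lgq_mapProd_le_one (fun j => (hq0 j).le) hq1 τ
  -- products over appended words
  have aPapp : ∀ u v, aP a (u ++ v) = aP a u * aP a v := fun u v => by simp [aP]
  have pPapp : ∀ u v, pP p (u ++ v) = pP p u * pP p v := fun u v => by simp [pP]
  have qPapp : ∀ u v, qP p (u ++ v) = qP p u * qP p v := fun u v => by simp [qP]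
  have bPanti : ∀ {X Y : List (Fin m)}, X <+: Y → bP b Y ≤ bP b X := by
    rintro X Y ⟨s, rfl⟩
    have : bP b (X ++ s) = bP b X * bP b s := by simp [bP]
    rw [this]
    nlinarith [bPpos X, bPle1 s, bPpos s]
  -- unpack memberships
  obtain ⟨hσΨ, ρσ, hρσflat, hρσE, hσE⟩ := hσ
  obtain ⟨lσ, hlσ1, hσlen, hσR1, hσwin1, hσwin2⟩ := hσΨ
  obtain ⟨hωΨ, ρω, hρωflat, hρωE, hωE⟩ := hω
  obtain ⟨lω, hlω1, hωlen, hωR1, hωwin1, hωwin2⟩ := hωΨ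
  obtain ⟨-, hσbL, hσbpre⟩ := hσb
  obtain ⟨-, hωbL, hωbpre⟩ := hωb
  obtain ⟨t, htL⟩ := hL
  have htlen : t.length ≤ 2 := by
    rw [← htL, List.length_append] at hlen
    omega
  have mapτ : (tau0 j0 hj0).map Sigma.fst = [j0, j0] := by simp [tau0]
  have syσb : sy σb = σ.1.map Sigma.fst ++ ([j0, j0] ++ σb.2) := by
    simp only [sy, hσbL, List.map_append, mapτ, List.append_assoc]
  have syωb : sy ωb = σ.1.map Sigma.fst ++ (t.map Sigma.fst ++ ([j0, j0] ++ ωb.2)) := by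
    simp only [sy, hωbL, ← htL, List.map_append, mapτ, List.append_assoc]
  have key : (sy σb <+: sy ωb ∨ sy ωb <+: sy σb) → False := by
    intro H
    rw [syσb, syωb] at H
    have H1 : ([j0, j0] ++ σb.2 <+: t.map Sigma.fst ++ ([j0, j0] ++ ωb.2)) ∨
        (t.map Sigma.fst ++ ([j0, j0] ++ ωb.2) <+: [j0, j0] ++ σb.2) := by
      rcases H with H | H
      · exact Or.inl (lgq_prefix_cancel H)
      · exact Or.inr (lgq_prefix_cancel H)
    -- comparability of the R-parts of σ and ω
    have H2 : σ.2 <+: t.map Sigma.fst ++ ω.2 ∨ t.map Sigma.fst ++ ω.2 <+: σ.2 := by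
      clear htL
      rcases t with _ | ⟨g1, t1⟩
      · simp only [List.map_nil, List.nil_append, List.cons_append] at H1 ⊢
        obtain ⟨-, H1⟩ := lgq_comp_cons H1
        obtain ⟨-, H1⟩ := lgq_comp_cons H1
        exact lgq_comp_of_prefix hσbpre hωbpre H1
      rcases t1 with _ | ⟨g2, t2⟩
      · simp only [List.map_cons, List.map_nil, List.cons_append, List.nil_append] at H1 ⊢
        obtain ⟨e1, H1⟩ := lgq_comp_cons H1
        obtain ⟨-, H1⟩ := lgq_comp_cons H1
        rw [← e1]
        exact lgq_comp_of_prefix hσbpre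
          (List.cons_prefix_cons.mpr ⟨rfl, hωbpre⟩) H1
      rcases t2 with _ | ⟨g3, t3⟩
      · simp only [List.map_cons, List.map_nil, List.cons_append, List.nil_append] at H1 ⊢
        obtain ⟨e1, H1⟩ := lgq_comp_cons H1
        obtain ⟨e2, H1⟩ := lgq_comp_cons H1
        rw [← e1, ← e2]
        exact lgq_comp_of_prefix hσbpre
          (List.cons_prefix_cons.mpr ⟨rfl, List.cons_prefix_cons.mpr ⟨rfl, hωbpre⟩⟩) H1
      · simp only [List.length_cons] at htlen
        omega
    -- comparability of the y-words of σ and ω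
    have Hy : sy σ <+: sy ω ∨ sy ω <+: sy σ := by
      have e2 : sy ω = σ.1.map Sigma.fst ++ (t.map Sigma.fst ++ ω.2) := by
        simp only [sy, ← htL, List.map_append, List.append_assoc]
      rw [show sy σ = σ.1.map Sigma.fst ++ σ.2 from rfl, e2]
      rcases H2 with h | h
      · exact Or.inl (lgq_prefix_append_left _ h)
      · exact Or.inr (lgq_prefix_append_left _ h)
    have hωL_a : aP a ω.1 = aP a σ.1 * aP a t := by rw [← htL, aPapp]
    -- `sy ω` cannot be a strict prefix of `sy σ`
    have noStrict : sy ω <+: sy σ → sy ω ≠ sy σ → False := by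
      intro h hne'
      have h1 : sy ω <+: (sy σ).dropLast := lgq_prefix_dropLast h hne'
      have h2 : bP b ((sy σ).dropLast) ≤ bP b (sy ω) := bPanti h1
      have h3 : aP a σ.1 ≤ bP b (sy ω) := le_trans hσwin1 h2
      have h4 : aP a ω.1 ≤ aP a σ.1 := by
        rw [hωL_a]
        nlinarith [aPpos σ.1, aPle1 t, aPpos t]
      linarith [hωwin2]
    have Hσω : sy σ <+: sy ω := by
      rcases Hy with h | h
      · exact h
      · by_cases he : sy ω = sy σ
        · rw [he]
        · exact absurd (noStrict h he) not_false
    rcases eq_or_ne t [] with rfl | htne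
    · -- t = [] : σ and ω have the same L-part
      have hωL : ω.1 = σ.1 := by rw [← htL, List.append_nil]
      by_cases he : sy σ = sy ω
      · apply hne
        have h2 : σ.2 = ω.2 := by
          have h3 := he
          rw [show sy σ = σ.1.map Sigma.fst ++ σ.2 from rfl,
            show sy ω = ω.1.map Sigma.fst ++ ω.2 from rfl, hωL] at h3
          exact List.append_cancel_left h3
        exact Prod.ext hωL.symm h2
      · have h1 : sy σ <+: (sy ω).dropLast := lgq_prefix_dropLast Hσω he
        have h2 : bP b ((sy ω).dropLast) ≤ bP b (sy σ) := bPanti h1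
        have h3 : aP a ω.1 ≤ bP b (sy σ) := le_trans hωwin1 h2
        rw [hωL] at h3
        linarith [hσwin2]
    · -- t ≠ [] : use the flat predecessor of ω
      have hσL1 : 1 ≤ σ.1.length := by omega
      have ht1 : 1 ≤ t.length := List.length_pos_iff.mpr htne
      have hωlen1 : 2 ≤ ω.1.length := by
        rw [← htL, List.length_append]
        omega
      rcases hρωflat with ⟨h1, -⟩ | ⟨-, hρΨ, hρL, hρy⟩
      · omega
      obtain ⟨-, -, -, hρwin2⟩ := hρΨ
      have hρL' : ρω.1 = σ.1 ++ t.dropLast := by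
        rw [hρL, ← htL, List.dropLast_append_of_ne_nil htne]
      have hss : sy σ <+: sy ρω := by
        rcases List.prefix_or_prefix_of_prefix hρy Hσω with h | h
        · by_cases he : sy ρω = sy σ
          · rw [he]
          · exfalso
            have h1 : sy ρω <+: (sy σ).dropLast := lgq_prefix_dropLast h he
            have h2 : bP b ((sy σ).dropLast) ≤ bP b (sy ρω) := bPanti h1
            have h3 : aP a σ.1 ≤ bP b (sy ρω) := le_trans hσwin1 h2
            have h4 : aP a ρω.1 ≤ aP a σ.1 := by
              rw [hρL', aPapp]
              nlinarith [aPpos σ.1, aPle1 t.dropLast, aPpos t.dropLast]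
            linarith [hρwin2]
        · exact h
      have hRpre : σ.2 <+: (t.dropLast.map Sigma.fst ++ ρω.2) := by
        have e2 : sy ρω = σ.1.map Sigma.fst ++ (t.dropLast.map Sigma.fst ++ ρω.2) := by
          simp only [sy, hρL', List.map_append, List.append_assoc]
        rw [show sy σ = σ.1.map Sigma.fst ++ σ.2 from rfl, e2] at hss
        exact lgq_prefix_cancel hss
      obtain ⟨w, hw⟩ := hRpre
      have hqeq : qP p σ.2 * qP p w = qP p (t.dropLast.map Sigma.fst) * qP p ρω.2 := by
        rw [← qPapp, ← qPapp, hw]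
      have hK : pP p t.dropLast * qP p ρω.2 * aP a t.dropLast ^ r ≤ qP p σ.2 := by
        have k1 : pP p t.dropLast ≤ qP p (t.dropLast.map Sigma.fst) :=
          lgq_pP_le_qP p hp _
        have k2 : aP a t.dropLast ^ r ≤ 1 :=
          Real.rpow_le_one (aPpos _).le (aPle1 _) hr.le
        have k2' : (0:ℝ) ≤ aP a t.dropLast ^ r := Real.rpow_nonneg (aPpos _).le r
        calc pP p t.dropLast * qP p ρω.2 * aP a t.dropLast ^ r
            ≤ qP p (t.dropLast.map Sigma.fst) * qP p ρω.2 * 1 := by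
              refine mul_le_mul ?_ k2 k2' ?_
              · exact mul_le_mul_of_nonneg_right k1 (qPpos _).le
              · exact mul_nonneg (qPpos _).le (qPpos _).le
          _ = qP p σ.2 * qP p w := by rw [mul_one]; exact hqeq.symm
          _ ≤ qP p σ.2 := mul_le_of_le_one_right (qPpos _).le (qPle1 w)
      have hEle : Er a p r ρω ≤ Er a p r σ := by
        have e1 : Er a p r ρω = (pP p σ.1 * aP a σ.1 ^ r) *
            (pP p t.dropLast * qP p ρω.2 * aP a t.dropLast ^ r) := by
          simp only [Er, hρL', pPapp, aPapp,
            Real.mul_rpow (aPpos σ.1).le (aPpos t.dropLast).le]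
          ring
        have e2 : Er a p r σ = (pP p σ.1 * aP a σ.1 ^ r) * qP p σ.2 := by
          simp only [Er]; ring
        rw [e1, e2]
        exact mul_le_mul_of_nonneg_left hK
          (mul_nonneg (pPpos _).le (Real.rpow_nonneg (aPpos _).le r))
      linarith [hρωE, hEle, hσE]
  exact ⟨fun h => key (Or.inl h), fun h => key (Or.inr h)⟩

end

end LGQ
end

section
/- Assume n_{j_0} ≥ 2 for some j_0 ∈ G_y and put τ_0 := ((1,j_0),(n_{j_0},j_0)). Let A_{5,r} := ⌊log(q̲² η̲_r)/(r·log ā)⌋ and T_{1,r} := ⌊(A_1 + A_{5,r} + 3)/A_4⌋. Then for every n > T_{1,r} and all σ, ω ∈ Λ_{n,r} with σ_L a proper initial segment of ω_L, and for any bar-extensions σ̄ of σ and ω̄ of ω, the words σ̄_y and ω̄_y are incomparable. -/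
open Filter MeasureTheory
open scoped BigOperators ENNReal NNReal Topology

namespace LGQ

noncomputable section

variable {m : ℕ} {n : Fin m → ℕ}

/-! ### Auxiliary machinery for the proof -/

section AuxLists

variable {α : Type*}

lemma lp_pos {f : α → ℝ} {w : List α} (h : ∀ x ∈ w, 0 < f x) :
    0 < (w.map f).prod := by
  apply List.prod_pos
  intro x hx
  obtain ⟨y, hy, rfl⟩ := List.mem_map.mp hx
  exact h y hy

lemma lp_le_one {f : α → ℝ} {w : List α} (h0 : ∀ x ∈ w, 0 < f x)
    (h1 : ∀ x ∈ w, f x ≤ 1) : (w.map f).prod ≤ 1 := by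
  induction w with
  | nil => simp
  | cons x t ih =>
    simp only [List.map_cons, List.prod_cons]
    have hx := h1 x (by simp)
    have ht : (t.map f).prod ≤ 1 := ih (fun y hy => h0 y (by simp [hy]))
      (fun y hy => h1 y (by simp [hy]))
    have htp : 0 < (t.map f).prod := lp_pos (fun y hy => h0 y (by simp [hy]))
    nlinarith [h0 x (by simp : x ∈ x :: t)]

lemma lp_lt_one {f : α → ℝ} {w : List α} (hw : w ≠ []) (h0 : ∀ x ∈ w, 0 < f x)
    (h1 : ∀ x ∈ w, f x < 1) : (w.map f).prod < 1 := by
  cases w with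
  | nil => exact absurd rfl hw
  | cons x t =>
    simp only [List.map_cons, List.prod_cons]
    have ht : (t.map f).prod ≤ 1 := lp_le_one (fun y hy => h0 y (by simp [hy]))
      (fun y hy => le_of_lt (h1 y (by simp [hy])))
    have htp : 0 < (t.map f).prod := lp_pos (fun y hy => h0 y (by simp [hy]))
    nlinarith [h0 x (by simp : x ∈ x :: t), h1 x (by simp : x ∈ x :: t)]

lemma lp_le_lp {f g : α → ℝ} {w : List α} (h0 : ∀ x ∈ w, 0 ≤ f x)
    (h : ∀ x ∈ w, f x ≤ g x) : (w.map f).prod ≤ (w.map g).prod := by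
  induction w with
  | nil => simp
  | cons x t ih =>
    simp only [List.map_cons, List.prod_cons]
    have h1 : (t.map f).prod ≤ (t.map g).prod := ih (fun y hy => h0 y (by simp [hy]))
      (fun y hy => h y (by simp [hy]))
    have h2 : 0 ≤ (t.map f).prod := by
      apply List.prod_nonneg
      intro y hy
      obtain ⟨z, hz, rfl⟩ := List.mem_map.mp hy
      exact h0 z (by simp [hz])
    have hfx := h0 x (by simp : x ∈ x :: t)
    have hgx := h x (by simp : x ∈ x :: t)
    nlinarith

lemma lp_lt_lp {f g : α → ℝ} {w : List α} (hw : w ≠ []) (h0 : ∀ x ∈ w, 0 < f x)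
    (h : ∀ x ∈ w, f x < g x) : (w.map f).prod < (w.map g).prod := by
  cases w with
  | nil => exact absurd rfl hw
  | cons x t =>
    simp only [List.map_cons, List.prod_cons]
    have h1 : (t.map f).prod ≤ (t.map g).prod :=
      lp_le_lp (fun y hy => le_of_lt (h0 y (by simp [hy])))
        (fun y hy => le_of_lt (h y (by simp [hy])))
    have h2 : 0 < (t.map f).prod := lp_pos (fun y hy => h0 y (by simp [hy]))
    have hfx := h0 x (by simp : x ∈ x :: t)
    have hgx := h x (by simp : x ∈ x :: t)
    nlinarith

lemma lp_le_pow {f : α → ℝ} {w : List α} {C : ℝ} (hC : 0 ≤ C)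
    (h0 : ∀ x ∈ w, 0 ≤ f x) (h : ∀ x ∈ w, f x ≤ C) :
    (w.map f).prod ≤ C ^ w.length := by
  induction w with
  | nil => simp
  | cons x t ih =>
    simp only [List.map_cons, List.prod_cons, List.length_cons, pow_succ]
    have h1 : (t.map f).prod ≤ C ^ t.length := ih (fun y hy => h0 y (by simp [hy]))
      (fun y hy => h y (by simp [hy]))
    have h2 : 0 ≤ (t.map f).prod := by
      apply List.prod_nonneg
      intro y hy
      obtain ⟨z, hz, rfl⟩ := List.mem_map.mp hy
      exact h0 z (by simp [hz])
    have hfx := h0 x (by simp : x ∈ x :: t)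
    have hgx := h x (by simp : x ∈ x :: t)
    have hCp : 0 ≤ C ^ t.length := pow_nonneg hC _
    calc f x * (t.map f).prod ≤ C * (t.map f).prod := by nlinarith
    _ ≤ C * C ^ t.length := by nlinarith
    _ = C ^ t.length * C := by ring

lemma pow_le_lp {f : α → ℝ} {w : List α} {c : ℝ} (hc : 0 ≤ c)
    (h : ∀ x ∈ w, c ≤ f x) : c ^ w.length ≤ (w.map f).prod := by
  induction w with
  | nil => simp
  | cons x t ih =>
    simp only [List.map_cons, List.prod_cons, List.length_cons, pow_succ]
    have h1 : c ^ t.length ≤ (t.map f).prod := ih (fun y hy => h y (by simp [hy]))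
    have hcp : 0 ≤ c ^ t.length := pow_nonneg hc _
    have hfx := h x (by simp : x ∈ x :: t)
    calc c ^ t.length * c ≤ c ^ t.length * f x := by nlinarith
    _ ≤ (t.map f).prod * f x := by nlinarith
    _ = f x * (t.map f).prod := by ring

lemma pre_append_left {x y c : List α} (h : x <+: y) : c ++ x <+: c ++ y := by
  obtain ⟨t, rfl⟩ := h
  exact ⟨t, by simp⟩

lemma dropLast_take {w : List α} {u : ℕ} (hu : u ≤ w.length) :
    (w.take u).dropLast = w.take (u - 1) := by
  rw [List.dropLast_eq_take, List.take_take]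
  congr 1
  simp [List.length_take]
  omega

lemma dropLast_append' {x y : List α} (hy : y ≠ []) :
    (x ++ y).dropLast = x ++ y.dropLast := by
  rw [List.dropLast_eq_take, List.dropLast_eq_take]
  have h1 : (x ++ y).length = x.length + y.length := by simp
  have h2 : 1 ≤ y.length := List.length_pos_iff.mpr hy
  rw [h1]
  have : x.length + y.length - 1 = x.length + (y.length - 1) := by omega
  rw [this, List.take_length_add_append]

lemma take_prefix_take {w : List α} {u v : ℕ} (h : u ≤ v) :
    w.take u <+: w.take v := by
  have : w.take u = (w.take v).take u := by rw [List.take_take]; congr 1; omega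
  rw [this]
  exact List.take_prefix _ _

end AuxLists

section AuxCtx

/-- Bundled standing hypotheses. -/
structure Ctx (m : ℕ) (n : Fin m → ℕ) (a : Alph m n → ℝ) (b : Fin m → ℝ)
    (p : Alph m n → ℝ) (r : ℝ) : Prop where
  hm : 2 ≤ m
  hn : ∀ j, 1 ≤ n j
  hab : ∀ g : Alph m n, 0 < a g ∧ a g < b g.1 ∧ b g.1 < 1
  hp : ∀ g, 0 < p g
  hp1 : ∑ g : Alph m n, p g = 1
  hr : 0 < r

variable {m : ℕ} {n : Fin m → ℕ} {a : Alph m n → ℝ} {b : Fin m → ℝ}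
  {p : Alph m n → ℝ} {r : ℝ}

private lemma exists_eq_iInf {ι : Type*} [Fintype ι] [Nonempty ι] (f : ι → ℝ) :
    ∃ i, (⨅ j, f j) = f i ∧ ∀ j, f i ≤ f j := by
  obtain ⟨i, _, hi⟩ := Finset.exists_min_image Finset.univ f ⟨Classical.arbitrary ι, Finset.mem_univ _⟩
  refine ⟨i, le_antisymm (ciInf_le (Set.Finite.bddBelow (Set.finite_range f)) i)
    (le_ciInf fun j => hi j (Finset.mem_univ j)), fun j => hi j (Finset.mem_univ j)⟩

private lemma exists_eq_iSup {ι : Type*} [Fintype ι] [Nonempty ι] (f : ι → ℝ) :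
    ∃ i, (⨆ j, f j) = f i ∧ ∀ j, f j ≤ f i := by
  obtain ⟨i, _, hi⟩ := Finset.exists_max_image Finset.univ f ⟨Classical.arbitrary ι, Finset.mem_univ _⟩
  refine ⟨i, le_antisymm (ciSup_le fun j => hi j (Finset.mem_univ j))
    (le_ciSup (Set.Finite.bddAbove (Set.finite_range f)) i), fun j => hi j (Finset.mem_univ j)⟩

namespace Ctx

variable (hc : Ctx m n a b p r)
include hc

lemma mpos : 0 < m := by have := hc.hm; omega

lemma finm_ne : Nonempty (Fin m) := ⟨⟨0, hc.mpos⟩⟩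

lemma alph_ne : Nonempty (Alph m n) := by
  have := hc.finm_ne
  obtain ⟨j⟩ := this
  exact ⟨⟨j, ⟨0, hc.hn j⟩⟩⟩

lemma aLo_le (g : Alph m n) : aLo a ≤ a g := by
  have := hc.alph_ne
  obtain ⟨i, hi, hall⟩ := exists_eq_iInf a
  rw [aLo, hi]; exact hall g

lemma aLo_pos : 0 < aLo a := by
  have := hc.alph_ne
  obtain ⟨i, hi, _⟩ := exists_eq_iInf a
  rw [aLo, hi]; exact (hc.hab i).1

lemma le_aHi (g : Alph m n) : a g ≤ aHi a := by
  have := hc.alph_ne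
  obtain ⟨i, hi, hall⟩ := exists_eq_iSup a
  rw [aHi, hi]; exact hall g

lemma aHi_lt_one : aHi a < 1 := by
  have := hc.alph_ne
  obtain ⟨i, hi, _⟩ := exists_eq_iSup a
  rw [aHi, hi]
  exact lt_trans (hc.hab i).2.1 (hc.hab i).2.2

lemma aHi_pos : 0 < aHi a := lt_of_lt_of_le hc.aLo_pos (by
  have := hc.alph_ne
  obtain ⟨g⟩ := this
  exact le_trans (hc.aLo_le g) (hc.le_aHi g))

lemma aLo_lt_one : aLo a < 1 := by
  have := hc.alph_ne
  obtain ⟨g⟩ := this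
  exact lt_of_le_of_lt (le_trans (hc.aLo_le g) (hc.le_aHi g)) hc.aHi_lt_one

lemma bLo_le (j : Fin m) : bLo b ≤ b j := by
  have := hc.finm_ne
  obtain ⟨i, hi, hall⟩ := exists_eq_iInf b
  rw [bLo, hi]; exact hall j

lemma bLo_pos : 0 < bLo b := by
  have := hc.finm_ne
  obtain ⟨i, hi, _⟩ := exists_eq_iInf b
  rw [bLo, hi]
  have := hc.hab ⟨i, ⟨0, hc.hn i⟩⟩
  exact lt_trans this.1 this.2.1

lemma le_bHi (j : Fin m) : b j ≤ bHi b := by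
  have := hc.finm_ne
  obtain ⟨i, hi, hall⟩ := exists_eq_iSup b
  rw [bHi, hi]; exact hall j

lemma bHi_lt_one : bHi b < 1 := by
  have := hc.finm_ne
  obtain ⟨i, hi, _⟩ := exists_eq_iSup b
  rw [bHi, hi]
  exact (hc.hab ⟨i, ⟨0, hc.hn i⟩⟩).2.2

lemma bHi_pos : 0 < bHi b := by
  have := hc.finm_ne
  obtain ⟨j⟩ := this
  exact lt_of_lt_of_le hc.bLo_pos (le_trans (hc.bLo_le j) (hc.le_bHi j))

lemma bLo_lt_one : bLo b < 1 := by
  have := hc.finm_ne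
  obtain ⟨j⟩ := this
  exact lt_of_le_of_lt (le_trans (hc.bLo_le j) (hc.le_bHi j)) hc.bHi_lt_one

lemma aLo_lt_bHi : aLo a < bHi b := by
  have := hc.alph_ne
  obtain ⟨g⟩ := this
  exact lt_of_le_of_lt (hc.aLo_le g) (lt_of_lt_of_le (hc.hab g).2.1 (hc.le_bHi g.1))

lemma pLo_le (g : Alph m n) : pLo p ≤ p g := by
  have := hc.alph_ne
  obtain ⟨i, hi, hall⟩ := exists_eq_iInf p
  rw [pLo, hi]; exact hall g

lemma pLo_pos : 0 < pLo p := by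
  have := hc.alph_ne
  obtain ⟨i, hi, _⟩ := exists_eq_iInf p
  rw [pLo, hi]; exact hc.hp i

lemma p_le_one (g : Alph m n) : p g ≤ 1 := by
  rw [← hc.hp1]
  exact Finset.single_le_sum (fun i _ => le_of_lt (hc.hp i)) (Finset.mem_univ g)

lemma p_lt_one (g : Alph m n) : p g < 1 := by
  have h2 : ∃ g' : Alph m n, g' ≠ g := by
    have hm := hc.hm
    by_cases hj : (g.1 : ℕ) = 0
    · exact ⟨⟨⟨1, by omega⟩, ⟨0, hc.hn _⟩⟩, by
        intro h; apply_fun (fun x => (x.1 : ℕ)) at h; simp at h; omega⟩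
    · exact ⟨⟨⟨0, by omega⟩, ⟨0, hc.hn _⟩⟩, by
        intro h; apply_fun (fun x => (x.1 : ℕ)) at h; simp at h; omega⟩
  obtain ⟨g', hg'⟩ := h2
  have : p g + p g' ≤ 1 := by
    rw [← hc.hp1]
    have : ({g, g'} : Finset (Alph m n)) ⊆ Finset.univ := Finset.subset_univ _
    calc p g + p g' = ∑ x ∈ ({g, g'} : Finset (Alph m n)), p x := by
          rw [Finset.sum_pair (Ne.symm hg')]
    _ ≤ ∑ x : Alph m n, p x :=
          Finset.sum_le_sum_of_subset_of_nonneg this (fun i _ _ => le_of_lt (hc.hp i))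
  have := hc.hp g'
  linarith

lemma pLo_lt_one : pLo p < 1 := by
  have := hc.alph_ne
  obtain ⟨g⟩ := this
  exact lt_of_le_of_lt (hc.pLo_le g) (hc.p_lt_one g)

lemma qf_pos (j : Fin m) : 0 < qf p j := by
  apply Finset.sum_pos (fun i _ => hc.hp _)
  exact ⟨⟨0, hc.hn j⟩, Finset.mem_univ _⟩

lemma p_le_qf (g : Alph m n) : p g ≤ qf p g.1 := by
  obtain ⟨j, i⟩ := g
  exact Finset.single_le_sum (fun i' _ => le_of_lt (hc.hp ⟨j, i'⟩)) (Finset.mem_univ i)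

lemma qf_le_one (j : Fin m) : qf p j ≤ 1 := by
  rw [← hc.hp1]
  have : ∑ g : Alph m n, p g = ∑ j' : Fin m, ∑ i : Fin (n j'), p ⟨j', i⟩ := by
    rw [Finset.sum_sigma']
    exact Finset.sum_congr rfl (fun x _ => rfl)
  rw [this]
  calc qf p j ≤ ∑ j' : Fin m, qf p j' :=
        Finset.single_le_sum (fun j' _ => le_of_lt (hc.qf_pos j')) (Finset.mem_univ j)
  _ = ∑ j' : Fin m, ∑ i : Fin (n j'), p ⟨j', i⟩ := rfl

lemma qLo_le (j : Fin m) : qLo p ≤ qf p j := by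
  have := hc.finm_ne
  obtain ⟨i, hi, hall⟩ := exists_eq_iInf (qf p)
  rw [qLo, hi]; exact hall j

lemma qLo_pos : 0 < qLo p := by
  have := hc.finm_ne
  obtain ⟨i, hi, _⟩ := exists_eq_iInf (qf p)
  rw [qLo, hi]; exact hc.qf_pos i

lemma qLo_le_one : qLo p ≤ 1 := by
  have := hc.finm_ne
  obtain ⟨j⟩ := this
  exact le_trans (hc.qLo_le j) (hc.qf_le_one j)

lemma a_le_A3_mul (g : Alph m n) : a g ≤ A3 a b * b g.1 := by
  have hb := lt_trans (hc.hab g).1 (hc.hab g).2.1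
  have h1 : a g / b g.1 ≤ A3 a b := by
    have := hc.alph_ne
    obtain ⟨i, hi, hall⟩ := exists_eq_iSup (fun g : Alph m n => a g / b g.1)
    rw [A3, hi]; exact hall g
  calc a g = (a g / b g.1) * b g.1 := by field_simp
  _ ≤ A3 a b * b g.1 := by nlinarith

lemma A3_pos : 0 < A3 a b := by
  have := hc.alph_ne
  obtain ⟨i, hi, hall⟩ := exists_eq_iSup (fun g : Alph m n => a g / b g.1)
  rw [A3, hi]
  have h := hc.hab i
  have hb := lt_trans h.1 h.2.1
  exact div_pos h.1 hb

lemma A3_lt_one : A3 a b < 1 := by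
  have := hc.alph_ne
  obtain ⟨i, hi, hall⟩ := exists_eq_iSup (fun g : Alph m n => a g / b g.1)
  rw [A3, hi]
  have h := hc.hab i
  rw [div_lt_one (by linarith [h.1, h.2.1])]
  exact h.2.1

lemma A4_pos : 0 < A4 a b := by
  rw [A4]
  have h1 : Real.log (A3 a b) < 0 := Real.log_neg hc.A3_pos hc.A3_lt_one
  have h2 : Real.log (bLo b) < 0 := Real.log_neg hc.bLo_pos hc.bLo_lt_one
  exact div_pos_of_neg_of_neg h1 h2

lemma A1_ge_one : 1 ≤ A1 a b := by
  rw [A1]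
  have h1 : Real.log (aLo a) < 0 := Real.log_neg hc.aLo_pos hc.aLo_lt_one
  have h2 : Real.log (bHi b) < 0 := Real.log_neg hc.bHi_pos hc.bHi_lt_one
  have h3 : (0:ℝ) < Real.log (aLo a) / Real.log (bHi b) := div_pos_of_neg_of_neg h1 h2
  have : (0:ℤ) ≤ ⌊Real.log (aLo a) / Real.log (bHi b)⌋ := by
    rw [Int.le_floor]; push_cast; linarith
  omega

lemma etaLo_pos : 0 < etaLo a b p r := by
  rw [etaLo]
  have h1 := hc.pLo_pos
  have h2 := hc.qLo_pos
  have h3 : (0:ℝ) < qLo p ^ A1 a b := zpow_pos h2 _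
  have h4 : (0:ℝ) < aLo a ^ r := Real.rpow_pos_of_pos hc.aLo_pos r
  positivity

lemma etaLo_le_pLo : etaLo a b p r ≤ pLo p := by
  rw [etaLo]
  have h3 : qLo p ^ A1 a b ≤ 1 := zpow_le_one₀ hc.qLo_pos hc.qLo_le_one (by linarith [hc.A1_ge_one])
  have h4 : aLo a ^ r ≤ 1 := Real.rpow_le_one (le_of_lt hc.aLo_pos) (le_of_lt hc.aLo_lt_one) (le_of_lt hc.hr)
  have h3' : (0:ℝ) < qLo p ^ A1 a b := zpow_pos hc.qLo_pos _
  have h4' : (0:ℝ) < aLo a ^ r := Real.rpow_pos_of_pos hc.aLo_pos r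
  have h5 := hc.pLo_pos
  have h6 : pLo p * qLo p ^ A1 a b ≤ pLo p := mul_le_of_le_one_right (le_of_lt h5) h3
  have h7 : 0 ≤ pLo p * qLo p ^ A1 a b := by positivity
  calc pLo p * qLo p ^ A1 a b * aLo a ^ r ≤ pLo p * qLo p ^ A1 a b :=
        mul_le_of_le_one_right h7 h4
  _ ≤ pLo p := h6

lemma etaLo_lt_one : etaLo a b p r < 1 :=
  lt_of_le_of_lt hc.etaLo_le_pLo hc.pLo_lt_one

end Ctx

end AuxCtx

section AuxWords

variable {m : ℕ} {n : Fin m → ℕ} {a : Alph m n → ℝ} {b : Fin m → ℝ}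
  {p : Alph m n → ℝ} {r : ℝ}

namespace Ctx

variable (hc : Ctx m n a b p r)
include hc

lemma aP_pos (w : List (Alph m n)) : 0 < aP a w :=
  lp_pos (fun g _ => (hc.hab g).1)

lemma aP_le_one (w : List (Alph m n)) : aP a w ≤ 1 :=
  lp_le_one (fun g _ => (hc.hab g).1)
    (fun g _ => le_of_lt (lt_trans (hc.hab g).2.1 (hc.hab g).2.2))

lemma aP_lt_one {w : List (Alph m n)} (hw : w ≠ []) : aP a w < 1 :=
  lp_lt_one hw (fun g _ => (hc.hab g).1)
    (fun g _ => lt_trans (hc.hab g).2.1 (hc.hab g).2.2)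

lemma bP_pos (τ : List (Fin m)) : 0 < bP b τ :=
  lp_pos (fun j _ => lt_trans (hc.hab ⟨j, ⟨0, hc.hn j⟩⟩).1 (hc.hab ⟨j, ⟨0, hc.hn j⟩⟩).2.1)

lemma b_pos (j : Fin m) : 0 < b j :=
  lt_trans (hc.hab ⟨j, ⟨0, hc.hn j⟩⟩).1 (hc.hab ⟨j, ⟨0, hc.hn j⟩⟩).2.1

lemma b_lt_one (j : Fin m) : b j < 1 := (hc.hab ⟨j, ⟨0, hc.hn j⟩⟩).2.2

lemma bP_le_one (τ : List (Fin m)) : bP b τ ≤ 1 :=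
  lp_le_one (fun j _ => hc.b_pos j) (fun j _ => le_of_lt (hc.b_lt_one j))

lemma pP_pos (w : List (Alph m n)) : 0 < pP p w :=
  lp_pos (fun g _ => hc.hp g)

lemma pP_le_one (w : List (Alph m n)) : pP p w ≤ 1 :=
  lp_le_one (fun g _ => hc.hp g) (fun g _ => hc.p_le_one g)

lemma qP_pos (τ : List (Fin m)) : 0 < qP p τ :=
  lp_pos (fun j _ => hc.qf_pos j)

lemma qP_le_one (τ : List (Fin m)) : qP p τ ≤ 1 :=
  lp_le_one (fun j _ => hc.qf_pos j) (fun j _ => hc.qf_le_one j)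

lemma Er_pos (σ : Wd m n) : 0 < Er a p r σ := by
  rw [Er]
  have h1 := hc.pP_pos σ.1
  have h2 := hc.qP_pos σ.2
  have h3 : (0:ℝ) < aP a σ.1 ^ r := Real.rpow_pos_of_pos (hc.aP_pos σ.1) r
  positivity

/-- `a`-product is strictly below the corresponding `b`-product (nonempty words). -/
lemma aP_lt_bP {w : List (Alph m n)} (hw : w ≠ []) :
    aP a w < bP b (w.map Sigma.fst) := by
  rw [aP, bP, List.map_map]
  exact lp_lt_lp hw (fun g _ => (hc.hab g).1) (fun g _ => (hc.hab g).2.1)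

lemma aP_le_bP (w : List (Alph m n)) : aP a w ≤ bP b (w.map Sigma.fst) := by
  rcases eq_or_ne w [] with rfl | hw
  · simp [aP, bP]
  · exact le_of_lt (hc.aP_lt_bP hw)

lemma pP_le_qP (w : List (Alph m n)) : pP p w ≤ qP p (w.map Sigma.fst) := by
  rw [pP, qP, List.map_map]
  exact lp_le_lp (fun g _ => le_of_lt (hc.hp g)) (fun g _ => hc.p_le_qf g)

lemma aP_le_A3_pow (w : List (Alph m n)) :
    aP a w ≤ A3 a b ^ w.length * bP b (w.map Sigma.fst) := by
  rw [aP, bP, List.map_map]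
  have h1 : (w.map a).prod ≤ (w.map (fun g => A3 a b * b g.1)).prod :=
    lp_le_lp (fun g _ => le_of_lt (hc.hab g).1) (fun g _ => hc.a_le_A3_mul g)
  have h2 : (w.map (fun g => A3 a b * b g.1)).prod
      = A3 a b ^ w.length * (w.map (fun g : Alph m n => b g.1)).prod := by
    induction w with
    | nil => simp
    | cons x t ih => simp [ih, pow_succ]; ring
  rw [h2] at h1
  exact h1

/-- products over prefixes: extension shrinks `bP`. -/
lemma bP_le_of_prefix {x y : List (Fin m)} (h : x <+: y) : bP b y ≤ bP b x := by
  obtain ⟨t, rfl⟩ := h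
  rw [bP, List.map_append, List.prod_append, ← bP, ← bP]
  exact mul_le_of_le_one_right (le_of_lt (hc.bP_pos x)) (hc.bP_le_one t)

lemma qP_le_of_prefix {x y : List (Fin m)} (h : x <+: y) : qP p y ≤ qP p x := by
  obtain ⟨t, rfl⟩ := h
  rw [qP, List.map_append, List.prod_append, ← qP, ← qP]
  exact mul_le_of_le_one_right (le_of_lt (hc.qP_pos x)) (hc.qP_le_one t)

/-- the crucial comparison principle: among prefixes of a common word,
a strictly smaller `b`-product means a strictly longer word. -/
lemma length_lt_of_bP_lt {V x y : List (Fin m)} (hx : x <+: V) (hy : y <+: V)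
    (h : bP b x < bP b y) : y.length < x.length := by
  by_contra hcon
  push_neg at hcon
  have hxy : x <+: y := List.prefix_of_prefix_length_le hx hy hcon
  exact absurd (hc.bP_le_of_prefix hxy) (not_le.mpr h)

omit hc in
lemma bP_append (x y : List (Fin m)) : bP b (x ++ y) = bP b x * bP b y := by
  rw [bP, bP, bP, List.map_append, List.prod_append]

omit hc in
lemma qP_append (x y : List (Fin m)) : qP p (x ++ y) = qP p x * qP p y := by
  rw [qP, qP, qP, List.map_append, List.prod_append]

omit hc in
lemma aP_append (x y : List (Alph m n)) : aP a (x ++ y) = aP a x * aP a y := by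
  rw [aP, aP, aP, List.map_append, List.prod_append]

omit hc in
lemma pP_append (x y : List (Alph m n)) : pP p (x ++ y) = pP p x * pP p y := by
  rw [pP, pP, pP, List.map_append, List.prod_append]

lemma bP_le_pow (τ : List (Fin m)) : bP b τ ≤ bHi b ^ τ.length :=
  lp_le_pow (le_of_lt hc.bHi_pos) (fun j _ => le_of_lt (hc.b_pos j))
    (fun j _ => hc.le_bHi j)

lemma pow_le_bP (τ : List (Fin m)) : bLo b ^ τ.length ≤ bP b τ :=
  pow_le_lp (le_of_lt hc.bLo_pos) (fun j _ => hc.bLo_le j)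

lemma aP_le_pow (w : List (Alph m n)) : aP a w ≤ aHi a ^ w.length :=
  lp_le_pow (le_of_lt hc.aHi_pos) (fun g _ => le_of_lt (hc.hab g).1)
    (fun g _ => hc.le_aHi g)

lemma pow_le_qP (τ : List (Fin m)) : qLo p ^ τ.length ≤ qP p τ :=
  pow_le_lp (le_of_lt hc.qLo_pos) (fun j _ => hc.qLo_le j)

/-- key numeric consequence: if `aLo ≤ bHi ^ ν` then `ν ≤ A1 - 1`. -/
lemma nu_le_of_aLo_le {ν : ℕ} (h : aLo a ≤ bHi b ^ ν) : (ν : ℤ) ≤ A1 a b - 1 := by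
  have hbH : Real.log (bHi b) < 0 := Real.log_neg hc.bHi_pos hc.bHi_lt_one
  have h1 : Real.log (aLo a) ≤ (ν : ℝ) * Real.log (bHi b) := by
    calc Real.log (aLo a) ≤ Real.log (bHi b ^ ν) := Real.log_le_log hc.aLo_pos h
    _ = (ν : ℝ) * Real.log (bHi b) := by rw [Real.log_pow]
  have h2 : (ν : ℝ) ≤ Real.log (aLo a) / Real.log (bHi b) :=
    (le_div_iff_of_neg hbH).mpr h1
  have : (ν : ℤ) ≤ ⌊Real.log (aLo a) / Real.log (bHi b)⌋ := by
    rw [Int.le_floor]; exact_mod_cast h2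
  rw [A1]; omega

end Ctx

end AuxWords

section AuxFlat

variable {m : ℕ} {n : Fin m → ℕ} {a : Alph m n → ℝ} {b : Fin m → ℝ}
  {p : Alph m n → ℝ} {r : ℝ}

/-- The canonical flat parent `σ^♭` of a word. -/
def flatParent (a : Alph m n → ℝ) (b : Fin m → ℝ) (σ : Wd m n) : Wd m n :=
  (σ.1.dropLast,
    ((sy σ).take (sInf {u | bP b ((sy σ).take u) < aP a σ.1.dropLast})).drop
      (σ.1.length - 1))

namespace Ctx

variable (hc : Ctx m n a b p r)

omit hc in
lemma sy_length (σ : Wd m n) : (sy σ).length = σ.1.length + σ.2.length := by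
  simp [sy]

include hc

lemma fp_spec {σ : Wd m n} {l : ℕ} (hl : 2 ≤ l) (hσ : σ ∈ Psi a b l) :
    flatParent a b σ ∈ Psi a b (l - 1) ∧
    IsFlat a b σ (flatParent a b σ) ∧
    (flatParent a b σ).1 = σ.1.dropLast ∧
    sy (flatParent a b σ) <+: sy σ ∧
    ((sy σ).length : ℤ) ≤ ((sy (flatParent a b σ)).length : ℤ) + A1 a b ∧
    Er a p r σ ≤ Er a p r (flatParent a b σ) ∧
    etaLo a b p r * Er a p r (flatParent a b σ) ≤ Er a p r σ := by
  obtain ⟨hlen1, hlen2, hup, hlow⟩ := hσ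
  have hσ1ne : σ.1 ≠ [] := by
    intro h; rw [h] at hlen1; simp at hlen1; omega
  have hYlen : (sy σ).length = l + σ.2.length := by rw [sy_length, hlen1]
  set g := σ.1.getLast hσ1ne with hg
  have hdg : σ.1.dropLast ++ [g] = σ.1 := List.dropLast_append_getLast hσ1ne
  have hdLlen : σ.1.dropLast.length = l - 1 := by simp [hlen1]
  have hdLne : σ.1.dropLast ≠ [] := by
    intro h; rw [h] at hdLlen; simp at hdLlen; omega
  have hApos : 0 < aP a σ.1.dropLast := hc.aP_pos _
  have hAlt : aP a σ.1.dropLast < 1 := hc.aP_lt_one hdLne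
  have haσ : aP a σ.1 = aP a σ.1.dropLast * a g := by
    conv_lhs => rw [← hdg]
    rw [aP_append]; simp [aP]
  have hagpos : 0 < a g := (hc.hab g).1
  have hag1 : a g ≤ 1 := le_of_lt (lt_trans (hc.hab g).2.1 (hc.hab g).2.2)
  have hAa : aP a σ.1 ≤ aP a σ.1.dropLast := by
    rw [haσ]; exact mul_le_of_le_one_right (le_of_lt hApos) hag1
  have hYS : (sy σ).length ∈ {u | bP b ((sy σ).take u) < aP a σ.1.dropLast} := by
    simp only [Set.mem_setOf_eq, List.take_length]
    exact lt_of_lt_of_le hlow hAa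
  set u0 := sInf {u | bP b ((sy σ).take u) < aP a σ.1.dropLast} with hu0
  have hu0S : bP b ((sy σ).take u0) < aP a σ.1.dropLast := Nat.sInf_mem ⟨_, hYS⟩
  have hu0le : u0 ≤ (sy σ).length := Nat.sInf_le hYS
  have hkey : (sy σ).take (l-1) = σ.1.dropLast.map Sigma.fst := by
    have h1 : (sy σ).take (l-1) = (σ.1.map Sigma.fst).take (l-1) := by
      rw [sy]
      exact List.take_append_of_le_length (by rw [List.length_map, hlen1]; omega)
    rw [h1, ← List.map_take]
    congr 1
    rw [List.dropLast_eq_take, hlen1]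
  have hA_le_take : ∀ u, u ≤ l - 1 → aP a σ.1.dropLast ≤ bP b ((sy σ).take u) := by
    intro u hu
    have h1 : aP a σ.1.dropLast ≤ bP b ((sy σ).take (l-1)) := by
      rw [hkey]; exact hc.aP_le_bP _
    exact le_trans h1 (hc.bP_le_of_prefix (take_prefix_take hu))
  have hu0l : l ≤ u0 := by
    by_contra hcon
    push_neg at hcon
    have := hA_le_take u0 (by omega)
    linarith
  have hwup : aP a σ.1.dropLast ≤ bP b ((sy σ).take (u0 - 1)) := by
    have h1 : u0 - 1 ∉ {u | bP b ((sy σ).take u) < aP a σ.1.dropLast} :=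
      Nat.notMem_of_lt_sInf (by omega)
    simpa using not_lt.mp h1
  set ρ := flatParent a b σ with hρ
  have hρ1 : ρ.1 = σ.1.dropLast := rfl
  have hρ2 : ρ.2 = ((sy σ).take u0).drop (l - 1) := by
    rw [hρ, flatParent, hlen1]
  have hsyρ : sy ρ = (sy σ).take u0 := by
    have h3 : ((sy σ).take u0).take (l-1) = σ.1.dropLast.map Sigma.fst := by
      rw [List.take_take]
      have : min (l-1) u0 = l-1 := by omega
      rw [this]; exact hkey
    calc sy ρ = ρ.1.map Sigma.fst ++ ρ.2 := rfl
    _ = ((sy σ).take u0).take (l-1) ++ ((sy σ).take u0).drop (l-1) := by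
        rw [hρ1, hρ2, h3]
    _ = (sy σ).take u0 := List.take_append_drop _ _
  have hsyρlen : (sy ρ).length = u0 := by
    rw [hsyρ, List.length_take]; omega
  have hρPsi : ρ ∈ Psi a b (l-1) := by
    refine ⟨by rw [hρ1]; exact hdLlen, ?_, ?_, ?_⟩
    · rw [hρ2, List.length_drop, List.length_take]; omega
    · rw [hρ1, hsyρ, dropLast_take hu0le]
      exact hwup
    · rw [hρ1, hsyρ]
      exact hu0S
  have hpre : sy ρ <+: sy σ := by rw [hsyρ]; exact List.take_prefix _ _
  have hflat : IsFlat a b σ ρ := by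
    refine Or.inr ⟨by omega, ?_, hρ1, hpre⟩
    rw [hlen1]; exact hρPsi
  -- growth bound
  have hgrow : ((sy σ).length : ℤ) ≤ ((sy ρ).length : ℤ) + A1 a b := by
    rw [hsyρlen]
    have hA1 := hc.A1_ge_one
    rcases le_or_gt (sy σ).length u0 with h | h
    · omega
    · have hnewlen : ((sy σ).drop u0).length = (sy σ).length - u0 := by
        simp [List.length_drop]
      have hnewne : (sy σ).drop u0 ≠ [] := by
        intro hcon; rw [hcon] at hnewlen; simp at hnewlen; omega
      have hYdl : (sy σ).dropLast = (sy σ).take u0 ++ ((sy σ).drop u0).dropLast := by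
        conv_lhs => rw [← List.take_append_drop u0 (sy σ)]
        exact dropLast_append' hnewne
      have h1 : aP a σ.1.dropLast * aLo a ≤ bP b (sy σ).dropLast := by
        have := hc.aLo_le g
        have h0 := hc.aLo_pos
        calc aP a σ.1.dropLast * aLo a ≤ aP a σ.1.dropLast * a g := by nlinarith
        _ = aP a σ.1 := haσ.symm
        _ ≤ bP b (sy σ).dropLast := hup
      have h2 : bP b (sy σ).dropLast
          = bP b ((sy σ).take u0) * bP b (((sy σ).drop u0).dropLast) := by
        rw [hYdl, bP_append]
      have h4 : bP b (((sy σ).drop u0).dropLast) ≤ 1 := hc.bP_le_one _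
      have h5 : 0 < bP b (((sy σ).drop u0).dropLast) := hc.bP_pos _
      have h6 : aLo a < bP b (((sy σ).drop u0).dropLast) := by nlinarith [hc.aLo_pos]
      have h7 : bP b (((sy σ).drop u0).dropLast) ≤ bHi b ^ ((sy σ).length - u0 - 1) := by
        have := hc.bP_le_pow (((sy σ).drop u0).dropLast)
        rwa [List.length_dropLast, hnewlen] at this
      have h8 : aLo a ≤ bHi b ^ ((sy σ).length - u0 - 1) := le_of_lt (lt_of_lt_of_le h6 h7)
      have h9 := hc.nu_le_of_aLo_le h8
      omega
  -- Er step facts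
  have heyd : qP p (σ.1.map Sigma.fst)
      = qP p (σ.1.dropLast.map Sigma.fst) * qf p g.1 := by
    conv_lhs => rw [← hdg]
    rw [List.map_append, qP_append]
    simp [qP]
  have hqid : qP p (σ.1.dropLast.map Sigma.fst) * (qf p g.1 * qP p σ.2)
      = qP p (σ.1.dropLast.map Sigma.fst) * (qP p ρ.2 * qP p ((sy σ).drop u0)) := by
    have e1 : qP p (sy σ) = qP p (σ.1.map Sigma.fst) * qP p σ.2 := by
      rw [sy, qP_append]
    have e2 : qP p (sy σ) = qP p (sy ρ) * qP p ((sy σ).drop u0) := by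
      conv_lhs => rw [← List.take_append_drop u0 (sy σ)]
      rw [qP_append, hsyρ]
    have e3 : qP p (sy ρ) = qP p (σ.1.dropLast.map Sigma.fst) * qP p ρ.2 := by
      calc qP p (sy ρ) = qP p (ρ.1.map Sigma.fst ++ ρ.2) := rfl
      _ = _ := by rw [qP_append, hρ1]
    calc qP p (σ.1.dropLast.map Sigma.fst) * (qf p g.1 * qP p σ.2)
        = qP p (σ.1.map Sigma.fst) * qP p σ.2 := by rw [heyd]; ring
    _ = qP p (sy σ) := e1.symm
    _ = qP p (sy ρ) * qP p ((sy σ).drop u0) := e2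
    _ = _ := by rw [e3]; ring
  have hqid' : qf p g.1 * qP p σ.2 = qP p ρ.2 * qP p ((sy σ).drop u0) :=
    mul_left_cancel₀ (ne_of_gt (hc.qP_pos _)) hqid
  have hrq : aP a σ.1 ^ r = aP a σ.1.dropLast ^ r * a g ^ r := by
    rw [haσ, Real.mul_rpow (le_of_lt hApos) (le_of_lt hagpos)]
  have hpPσ : pP p σ.1 = pP p σ.1.dropLast * p g := by
    conv_lhs => rw [← hdg]
    rw [pP_append]; simp [pP]
  have hErEq : Er a p r σ * qf p g.1
      = Er a p r ρ * (p g * a g ^ r * qP p ((sy σ).drop u0)) := by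
    rw [Er, Er, hρ1, hpPσ, hrq]
    calc pP p σ.1.dropLast * p g * qP p σ.2 * (aP a σ.1.dropLast ^ r * a g ^ r) * qf p g.1
        = pP p σ.1.dropLast * p g * (aP a σ.1.dropLast ^ r * a g ^ r)
          * (qf p g.1 * qP p σ.2) := by ring
    _ = pP p σ.1.dropLast * p g * (aP a σ.1.dropLast ^ r * a g ^ r)
          * (qP p ρ.2 * qP p ((sy σ).drop u0)) := by rw [hqid']
    _ = _ := by ring
  have hqfpos : 0 < qf p g.1 := hc.qf_pos _
  have hagr1 : a g ^ r ≤ 1 :=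
    Real.rpow_le_one (le_of_lt hagpos) hag1 (le_of_lt hc.hr)
  have hagrpos : (0:ℝ) < a g ^ r := Real.rpow_pos_of_pos hagpos r
  have hErle : Er a p r σ ≤ Er a p r ρ := by
    have hX : p g * a g ^ r * qP p ((sy σ).drop u0) ≤ qf p g.1 := by
      have s1 : p g * a g ^ r * qP p ((sy σ).drop u0) ≤ p g * a g ^ r :=
        mul_le_of_le_one_right (mul_nonneg (le_of_lt (hc.hp g)) (le_of_lt hagrpos)) (hc.qP_le_one _)
      have s2 : p g * a g ^ r ≤ p g :=
        mul_le_of_le_one_right (le_of_lt (hc.hp g)) hagr1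
      exact le_trans s1 (le_trans s2 (hc.p_le_qf g))
    have h1 : Er a p r σ * qf p g.1 ≤ Er a p r ρ * qf p g.1 := by
      rw [hErEq]
      exact mul_le_mul_of_nonneg_left hX (le_of_lt (hc.Er_pos ρ))
    exact le_of_mul_le_mul_right h1 hqfpos
  have hErge : etaLo a b p r * Er a p r ρ ≤ Er a p r σ := by
    have hν' : (((sy σ).drop u0).length : ℤ) ≤ A1 a b := by
      have : ((sy σ).drop u0).length = (sy σ).length - u0 := by simp
      omega
    have hq1 : qLo p ^ A1 a b ≤ qP p ((sy σ).drop u0) := by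
      calc qLo p ^ A1 a b ≤ qLo p ^ ((((sy σ).drop u0).length : ℕ) : ℤ) :=
            zpow_le_zpow_right_of_le_one₀ hc.qLo_pos hc.qLo_le_one hν'
      _ = qLo p ^ (((sy σ).drop u0).length : ℕ) := zpow_natCast _ _
      _ ≤ qP p ((sy σ).drop u0) := hc.pow_le_qP _
    have hX2 : etaLo a b p r * qf p g.1 ≤ p g * a g ^ r * qP p ((sy σ).drop u0) := by
      have s0 : etaLo a b p r * qf p g.1 ≤ etaLo a b p r :=
        mul_le_of_le_one_right (le_of_lt hc.etaLo_pos) (hc.qf_le_one _)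
      have s1 : aLo a ^ r ≤ a g ^ r :=
        Real.rpow_le_rpow (le_of_lt hc.aLo_pos) (hc.aLo_le g) (le_of_lt hc.hr)
      have hqz : (0:ℝ) < qLo p ^ A1 a b := zpow_pos hc.qLo_pos _
      have hqn : (0:ℝ) < qP p ((sy σ).drop u0) := hc.qP_pos _
      have halr : (0:ℝ) < aLo a ^ r := Real.rpow_pos_of_pos hc.aLo_pos r
      have s2 : etaLo a b p r ≤ p g * a g ^ r * qP p ((sy σ).drop u0) := by
        rw [etaLo]
        calc pLo p * qLo p ^ A1 a b * aLo a ^ r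
            ≤ p g * qP p ((sy σ).drop u0) * (a g ^ r) := by
              apply mul_le_mul
              · apply mul_le_mul (hc.pLo_le g) hq1 (le_of_lt hqz) (le_of_lt (hc.hp g))
              · exact s1
              · exact le_of_lt halr
              · exact mul_nonneg (le_of_lt (hc.hp g)) (le_of_lt hqn)
        _ = p g * a g ^ r * qP p ((sy σ).drop u0) := by ring
      exact le_trans s0 s2
    have h1 : (etaLo a b p r * Er a p r ρ) * qf p g.1 ≤ Er a p r σ * qf p g.1 := by
      rw [hErEq]
      calc etaLo a b p r * Er a p r ρ * qf p g.1
          = Er a p r ρ * (etaLo a b p r * qf p g.1) := by ring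
      _ ≤ Er a p r ρ * (p g * a g ^ r * qP p ((sy σ).drop u0)) :=
            mul_le_mul_of_nonneg_left hX2 (le_of_lt (hc.Er_pos ρ))
      _ = _ := rfl
    exact le_of_mul_le_mul_right h1 hqfpos
  exact ⟨hρPsi, hflat, hρ1, hpre, hgrow, hErle, hErge⟩

lemma fp_unique {σ ρ' : Wd m n} {l : ℕ} (hl : 2 ≤ l) (hσ : σ ∈ Psi a b l)
    (hflat : IsFlat a b σ ρ') : ρ' = flatParent a b σ := by
  obtain ⟨hlen1, hlen2, hup, hlow⟩ := hσ
  rcases hflat with ⟨h1, _⟩ | ⟨h1, hρ'Psi, hρ'1, hρ'pre⟩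
  · omega
  obtain ⟨hρPsi, _, hρ1, hρpre, _, _, _⟩ := hc.fp_spec hl ⟨hlen1, hlen2, hup, hlow⟩
  obtain ⟨hρ'l1, hρ'l2, hρ'up, hρ'low⟩ := hρ'Psi
  obtain ⟨hρl1, hρl2, hρup, hρlow⟩ := hρPsi
  have hA : aP a ρ'.1 = aP a (flatParent a b σ).1 := by rw [hρ'1, hρ1]
  -- both sy's are prefixes of sy σ with the window property; show equal lengths
  have hkey : ∀ x y : Wd m n, sy x <+: sy σ → sy y <+: sy σ →
      aP a x.1 = aP a y.1 →
      (bP b (sy x) < aP a x.1) → (aP a y.1 ≤ bP b (sy y).dropLast) →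
      1 ≤ y.2.length → y.1.length = x.1.length →
      (sy y).length ≤ (sy x).length := by
    intro x y hx hy haxy hxlow hyup hy2 hxy1
    by_contra hcon
    push_neg at hcon
    -- (sy x).length < (sy y).length, so sy x <+: (sy y).dropLast
    have hxlen : sy x = (sy σ).take (sy x).length := List.prefix_iff_eq_take.mp hx
    have hylen : sy y = (sy σ).take (sy y).length := List.prefix_iff_eq_take.mp hy
    have hyle : (sy y).length ≤ (sy σ).length := hy.length_le
    have hdl : (sy y).dropLast = (sy σ).take ((sy y).length - 1) := by
      conv_lhs => rw [hylen]
      exact dropLast_take hyle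
    have hxpre : sy x <+: (sy y).dropLast := by
      rw [hxlen, hdl]
      exact take_prefix_take (by omega)
    have : bP b (sy y).dropLast ≤ bP b (sy x) := hc.bP_le_of_prefix hxpre
    rw [haxy] at hxlow
    linarith
  have hlen_eq : (sy ρ').length = (sy (flatParent a b σ)).length := by
    have e1 := hkey ρ' (flatParent a b σ) hρ'pre hρpre hA hρ'low hρup hρl2
      (by rw [hρ1, hρ'1])
    have e2 := hkey (flatParent a b σ) ρ' hρpre hρ'pre hA.symm hρlow hρ'up hρ'l2
      (by rw [hρ1, hρ'1])
    omega
  have hsy_eq : sy ρ' = sy (flatParent a b σ) := by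
    rw [List.prefix_iff_eq_take.mp hρ'pre, List.prefix_iff_eq_take.mp hρpre, hlen_eq]
  have h2nd : ρ'.2 = (flatParent a b σ).2 := by
    have e : ρ'.1.map Sigma.fst ++ ρ'.2
        = (flatParent a b σ).1.map Sigma.fst ++ (flatParent a b σ).2 := hsy_eq
    rw [hρ'1, hρ1] at e
    exact List.append_cancel_left e
  have h1st : ρ'.1 = (flatParent a b σ).1 := by rw [hρ'1, hρ1]
  exact Prod.ext h1st h2nd

/-- `E_r ≥ η̲` on `Ψ₁`. -/
lemma Er_ge_eta_psi1 {σ : Wd m n} (hσ : σ ∈ Psi a b 1) :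
    etaLo a b p r ≤ Er a p r σ := by
  obtain ⟨hlen1, hlen2, hup, hlow⟩ := hσ
  obtain ⟨g, hg⟩ := List.length_eq_one_iff.mp hlen1
  have hsyd : (sy σ).dropLast.length = σ.2.length := by
    rw [List.length_dropLast, sy_length, hlen1]
    omega
  have h8 : aLo a ≤ bHi b ^ σ.2.length := by
    have h1 : aLo a ≤ aP a σ.1 := by
      rw [hg]; simpa [aP] using hc.aLo_le g
    have h2 := hc.bP_le_pow (sy σ).dropLast
    rw [hsyd] at h2
    linarith
  have h9 := hc.nu_le_of_aLo_le h8
  have hq1 : qLo p ^ A1 a b ≤ qP p σ.2 := by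
    calc qLo p ^ A1 a b ≤ qLo p ^ ((σ.2.length : ℕ) : ℤ) :=
          zpow_le_zpow_right_of_le_one₀ hc.qLo_pos hc.qLo_le_one (by omega)
    _ = qLo p ^ σ.2.length := zpow_natCast _ _
    _ ≤ qP p σ.2 := hc.pow_le_qP _
  have hqz : (0:ℝ) < qLo p ^ A1 a b := zpow_pos hc.qLo_pos _
  have s1 : aLo a ^ r ≤ a g ^ r :=
    Real.rpow_le_rpow (le_of_lt hc.aLo_pos) (hc.aLo_le g) (le_of_lt hc.hr)
  have halr : (0:ℝ) < aLo a ^ r := Real.rpow_pos_of_pos hc.aLo_pos r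
  rw [Er, hg, etaLo]
  have e1 : pP p [g] = p g := by simp [pP]
  have e2 : aP a [g] = a g := by simp [aP]
  rw [e1, e2]
  calc pLo p * qLo p ^ A1 a b * aLo a ^ r
      ≤ p g * qP p σ.2 * (a g ^ r) := by
        apply mul_le_mul
        · exact mul_le_mul (hc.pLo_le g) hq1 (le_of_lt hqz) (le_of_lt (hc.hp g))
        · exact s1
        · exact le_of_lt halr
        · exact mul_nonneg (le_of_lt (hc.hp g)) (le_of_lt (hc.qP_pos σ.2))
  _ = p g * qP p σ.2 * a g ^ r := rfl

lemma Er_ge_eta_pow : ∀ (l : ℕ), 1 ≤ l → ∀ (σ : Wd m n), σ ∈ Psi a b l →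
    etaLo a b p r ^ l ≤ Er a p r σ := by
  intro l
  induction l with
  | zero => omega
  | succ k ih =>
    intro _ σ hσ
    rcases Nat.eq_zero_or_pos k with rfl | hk
    · simpa using hc.Er_ge_eta_psi1 hσ
    · obtain ⟨hρPsi, _, _, _, _, _, hErge⟩ := hc.fp_spec (by omega) hσ
      have h1 : etaLo a b p r ^ k ≤ Er a p r (flatParent a b σ) := by
        apply ih hk
        simpa using hρPsi
      calc etaLo a b p r ^ (k+1) = etaLo a b p r * etaLo a b p r ^ k := by ring
      _ ≤ etaLo a b p r * Er a p r (flatParent a b σ) := by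
            have := hc.etaLo_pos; nlinarith
      _ ≤ Er a p r σ := hErge

end Ctx

end AuxFlat
theorem stmt8
    (m : ℕ) (hm : 2 ≤ m) (n : Fin m → ℕ) (hn : ∀ j, 1 ≤ n j)
    (a : Alph m n → ℝ) (b : Fin m → ℝ)
    (hab : ∀ g : Alph m n, 0 < a g ∧ a g < b g.1 ∧ b g.1 < 1)
    (p : Alph m n → ℝ) (hp : ∀ g, 0 < p g) (hp1 : ∑ g : Alph m n, p g = 1)
    (r : ℝ) (hr : 0 < r)
    (j0 : Fin m) (hj0 : 2 ≤ n j0)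
    (N : ℕ) (hN : T1 a b p r < (N : ℤ))
    (σ ω : Wd m n) (hσ : σ ∈ Lam a b p r N) (hω : ω ∈ Lam a b p r N)
    (hL : σ.1 <+: ω.1) (hne : σ.1 ≠ ω.1)
    (σb ωb : Wd m n) (hσb : BarExt a b j0 hj0 σ σb) (hωb : BarExt a b j0 hj0 ω ωb) :
    ¬ sy σb <+: sy ωb ∧ ¬ sy ωb <+: sy σb := by
  classical
  have hc : Ctx m n a b p r := ⟨hm, hn, hab, hp, hp1, hr⟩
  obtain ⟨hσStar, ρσ, hρσflat, hρσE, hσE⟩ := hσ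
  obtain ⟨hωStar, ρω, hρωflat, hρωE, hωE⟩ := hω
  obtain ⟨l, hl1, hσPsi⟩ := hσStar
  obtain ⟨L, hL1, hωPsi⟩ := hωStar
  have hσlen : σ.1.length = l := hσPsi.1
  have hωlen : ω.1.length = L := hωPsi.1
  obtain ⟨ζ, hζ⟩ := hL
  have hζne : ζ ≠ [] := by
    intro h
    rw [h, List.append_nil] at hζ
    exact hne hζ
  set D := ζ.length with hDdef
  have hD1 : 1 ≤ D := List.length_pos_iff.mpr hζne
  have hLD : L = l + D := by
    rw [← hσlen, ← hωlen, ← hζ, List.length_append]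
  obtain ⟨hσbPsi, hσb1, hσb2⟩ := hσb
  obtain ⟨hωbPsi, hωb1, hωb2⟩ := hωb
  have htau : (tau0 j0 hj0).map Sigma.fst = [j0, j0] := rfl
  have hW : sy σb = σ.1.map Sigma.fst ++ ([j0, j0] ++ σb.2) := by
    rw [sy, hσb1, List.map_append, htau, List.append_assoc]
  have hV : sy ωb = ω.1.map Sigma.fst ++ ([j0, j0] ++ ωb.2) := by
    rw [sy, hωb1, List.map_append, htau, List.append_assoc]
  have hσ2ne : σ.2 ≠ [] := by
    have := hσPsi.2.1
    intro h; rw [h] at this; simp at this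
  have hσ2len : 1 ≤ σ.2.length := hσPsi.2.1
  -- the two distinguished prefixes of `sy σb`
  have hXwW : (σ.1.map Sigma.fst ++ ([j0, j0] ++ σ.2)) <+: sy σb := by
    rw [hW]
    exact pre_append_left (pre_append_left hσb2)
  have hXw'Xw : (σ.1.map Sigma.fst ++ ([j0, j0] ++ σ.2.dropLast))
      <+: (σ.1.map Sigma.fst ++ ([j0, j0] ++ σ.2)) :=
    pre_append_left (pre_append_left (List.dropLast_prefix σ.2))
  -- b-products of these prefixes
  have hbXw : bP b (σ.1.map Sigma.fst ++ ([j0, j0] ++ σ.2))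
      = bP b (sy σ) * (b j0 * b j0) := by
    rw [Ctx.bP_append, Ctx.bP_append, sy, Ctx.bP_append]
    simp [bP]; ring
  have hsyσd : (sy σ).dropLast = σ.1.map Sigma.fst ++ σ.2.dropLast := by
    rw [sy]; exact dropLast_append' hσ2ne
  have hbXw' : bP b (σ.1.map Sigma.fst ++ ([j0, j0] ++ σ.2.dropLast))
      = bP b (sy σ).dropLast * (b j0 * b j0) := by
    rw [Ctx.bP_append, Ctx.bP_append, hsyσd, Ctx.bP_append]
    simp [bP]; ring
  have hbj0 : 0 < b j0 := hc.b_pos j0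
  -- numeric facts
  have hA4 := hc.A4_pos
  have hA1 := hc.A1_ge_one
  have hη0 := hc.etaLo_pos
  have hη1 := hc.etaLo_lt_one
  -- `l > N`
  have hlN : N < l := by
    have h1 := hc.Er_ge_eta_pow l hl1 σ hσPsi
    have h2 : etaLo a b p r ^ l < etaLo a b p r ^ N := lt_of_le_of_lt h1 hσE
    exact (pow_lt_pow_iff_right_of_lt_one₀ hη0 hη1).mp h2
  -- `|σ.2| ≥ A1 + A5 + 4`
  have hσ2big : (A1 a b + A5 a b p r + 3 : ℤ) < (σ.2.length : ℤ) := by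
    have hbys : 0 < bP b (σ.1.map Sigma.fst) := hc.bP_pos _
    have h1 : bP b (σ.1.map Sigma.fst) * bP b σ.2 < A3 a b ^ l * bP b (σ.1.map Sigma.fst) := by
      have e : bP b (sy σ) = bP b (σ.1.map Sigma.fst) * bP b σ.2 := by
        rw [sy, Ctx.bP_append]
      have h2 := hσPsi.2.2.2
      have h3 := hc.aP_le_A3_pow σ.1
      rw [hσlen] at h3
      rw [e] at h2
      linarith
    have h2 : bP b σ.2 < A3 a b ^ l := by
      have h1' : bP b σ.2 * bP b (σ.1.map Sigma.fst)
          < A3 a b ^ l * bP b (σ.1.map Sigma.fst) := by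
        calc bP b σ.2 * bP b (σ.1.map Sigma.fst)
            = bP b (σ.1.map Sigma.fst) * bP b σ.2 := by ring
        _ < _ := h1
      exact (mul_lt_mul_iff_of_pos_right hbys).mp h1'
    have h3 : (σ.2.length : ℝ) * Real.log (bLo b) < (l : ℝ) * Real.log (A3 a b) := by
      have h4 : bLo b ^ σ.2.length ≤ bP b σ.2 := hc.pow_le_bP σ.2
      have h5 : Real.log (bLo b ^ σ.2.length) ≤ Real.log (bP b σ.2) :=
        Real.log_le_log (pow_pos hc.bLo_pos _) h4
      have h6 : Real.log (bP b σ.2) < Real.log (A3 a b ^ l) :=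
        Real.log_lt_log (hc.bP_pos σ.2) h2
      rw [Real.log_pow] at h5
      rw [Real.log_pow] at h6
      linarith
    have hblog : Real.log (bLo b) < 0 := Real.log_neg hc.bLo_pos hc.bLo_lt_one
    have h7 : (l : ℝ) * A4 a b < (σ.2.length : ℝ) := by
      rw [A4]
      have e : (l:ℝ) * (Real.log (A3 a b) / Real.log (bLo b))
          = ((l:ℝ) * Real.log (A3 a b)) / Real.log (bLo b) := by ring
      rw [e, div_lt_iff_of_neg hblog]
      linarith
    have hNA4 : ((A1 a b + A5 a b p r + 3 : ℤ) : ℝ) < (N : ℝ) * A4 a b := by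
      have h8 : ((A1 a b + A5 a b p r + 3 : ℤ) : ℝ) / A4 a b
          < ((T1 a b p r : ℤ) : ℝ) + 1 := by
        rw [T1]
        exact Int.lt_floor_add_one _
      have h9 : ((T1 a b p r : ℤ) : ℝ) + 1 ≤ (N : ℝ) := by
        have : T1 a b p r + 1 ≤ (N : ℤ) := by omega
        exact_mod_cast this
      rw [div_lt_iff₀ hA4] at h8
      have h10 : (((T1 a b p r : ℤ) : ℝ) + 1) * A4 a b ≤ (N:ℝ) * A4 a b :=
        mul_le_mul_of_nonneg_right h9 (le_of_lt hA4)
      linarith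
    have hNl : (N : ℝ) * A4 a b ≤ (l : ℝ) * A4 a b := by
      have : (N : ℝ) ≤ (l : ℝ) := by exact_mod_cast le_of_lt hlN
      exact mul_le_mul_of_nonneg_right this (le_of_lt hA4)
    have : ((A1 a b + A5 a b p r + 3 : ℤ) : ℝ) < (σ.2.length : ℝ) := by linarith
    exact_mod_cast this
  -- prove the key direction first
  have key : ¬ sy σb <+: sy ωb := by
    intro hWV
    have hXwV : (σ.1.map Sigma.fst ++ ([j0, j0] ++ σ.2)) <+: sy ωb := hXwW.trans hWV
    have hXw'V : (σ.1.map Sigma.fst ++ ([j0, j0] ++ σ.2.dropLast)) <+: sy ωb :=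
      (hXw'Xw.trans hXwW).trans hWV
    -- prefixes of `sy ωb` built from `ω`
    have hZV : ∀ u : ℕ, u ≤ ω.2.length →
        (ω.1.map Sigma.fst ++ ([j0, j0] ++ ω.2.take u)) <+: sy ωb := by
      intro u hu
      rw [hV]
      exact pre_append_left (pre_append_left ((List.take_prefix u ω.2).trans hωb2))
    have hYK2V : (ω.1.map Sigma.fst ++ ([j0, j0] ++ ω.2)) <+: sy ωb := by
      rw [hV]
      exact pre_append_left (pre_append_left hωb2)
    have hωmap : ω.1.map Sigma.fst = σ.1.map Sigma.fst ++ ζ.map Sigma.fst := by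
      rw [← hζ, List.map_append]
    have haω : aP a ω.1 = aP a σ.1 * aP a ζ := by
      rw [← hζ, Ctx.aP_append]
    have haζ1 : aP a ζ < 1 := hc.aP_lt_one hζne
    have haζ0 : 0 < aP a ζ := hc.aP_pos ζ
    have haσ0 : 0 < aP a σ.1 := hc.aP_pos σ.1
    -- `K + 2 ≥ w`
    have hbYK2 : bP b (ω.1.map Sigma.fst ++ ([j0, j0] ++ ω.2))
        = bP b (sy ω) * (b j0 * b j0) := by
      rw [Ctx.bP_append, Ctx.bP_append, sy, Ctx.bP_append]
      simp [bP]; ring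
    have hKw : l + 2 + σ.2.length ≤ L + 2 + ω.2.length := by
      have h1 : bP b (sy ω) < aP a σ.1 := by
        have h0 := hωPsi.2.2.2
        rw [haω] at h0
        exact lt_trans h0 (mul_lt_of_lt_one_right haσ0 haζ1)
      have h2 : aP a σ.1 ≤ bP b (sy σ).dropLast := hσPsi.2.2.1
      have h3 : bP b (ω.1.map Sigma.fst ++ ([j0, j0] ++ ω.2))
          < bP b (σ.1.map Sigma.fst ++ ([j0, j0] ++ σ.2.dropLast)) := by
        rw [hbYK2, hbXw']
        exact mul_lt_mul_of_pos_right (lt_of_lt_of_le h1 h2) (mul_pos hbj0 hbj0)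
      have h4 := hc.length_lt_of_bP_lt hYK2V hXw'V h3
      simp only [List.length_append, List.length_map, List.length_cons] at h4
      rw [hσlen, hωlen, List.length_dropLast] at h4
      omega
    have hXwYK2 : (σ.1.map Sigma.fst ++ ([j0, j0] ++ σ.2))
        <+: (ω.1.map Sigma.fst ++ ([j0, j0] ++ ω.2)) := by
      apply List.prefix_of_prefix_length_le hXwV hYK2V
      simp only [List.length_append, List.length_map, List.length_cons]
      rw [hσlen, hωlen]
      omega
    -- the quotient inequality: `etaLo < aP ζ ^ r`
    have hqζω : qP p (ζ.map Sigma.fst) * qP p ω.2 ≤ qP p σ.2 := by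
      obtain ⟨R, hR⟩ := hXwYK2
      have e1 : qP p (ω.1.map Sigma.fst ++ ([j0, j0] ++ ω.2))
          = qP p (σ.1.map Sigma.fst) * (qf p j0 * qf p j0)
            * (qP p (ζ.map Sigma.fst) * qP p ω.2) := by
        rw [hωmap, Ctx.qP_append, Ctx.qP_append, Ctx.qP_append]
        simp [qP]; ring
      have e2 : qP p (ω.1.map Sigma.fst ++ ([j0, j0] ++ ω.2))
          = qP p (σ.1.map Sigma.fst) * (qf p j0 * qf p j0) * (qP p σ.2 * qP p R) := by
        rw [← hR, Ctx.qP_append, Ctx.qP_append, Ctx.qP_append]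
        simp [qP]; ring
      have e3 : qP p (ζ.map Sigma.fst) * qP p ω.2 = qP p σ.2 * qP p R := by
        have hpos : qP p (σ.1.map Sigma.fst) * (qf p j0 * qf p j0) ≠ 0 := by
          have := hc.qP_pos (σ.1.map Sigma.fst)
          have := hc.qf_pos j0
          positivity
        apply mul_left_cancel₀ hpos
        rw [← e1, ← e2]
      have h5 : qP p R ≤ 1 := hc.qP_le_one R
      have h6 : 0 < qP p σ.2 := hc.qP_pos σ.2
      rw [e3]
      exact mul_le_of_le_one_right (le_of_lt h6) h5
    have hEωge : etaLo a b p r * etaLo a b p r ^ N ≤ Er a p r ω := by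
      have hL2 : 2 ≤ L := by omega
      obtain ⟨_, _, _, _, _, _, hErge⟩ := hc.fp_spec hL2 hωPsi
      have hρωeq : ρω = flatParent a b ω := hc.fp_unique hL2 hωPsi hρωflat
      rw [hρωeq] at hρωE
      calc etaLo a b p r * etaLo a b p r ^ N
          ≤ etaLo a b p r * Er a p r (flatParent a b ω) :=
            mul_le_mul_of_nonneg_left hρωE (le_of_lt hη0)
      _ ≤ Er a p r ω := hErge
    have hEgt : etaLo a b p r * Er a p r σ < Er a p r ω := by
      have : etaLo a b p r * Er a p r σ < etaLo a b p r * etaLo a b p r ^ N :=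
        mul_lt_mul_of_pos_left hσE hη0
      linarith
    have hζr : etaLo a b p r < aP a ζ ^ r := by
      have e1 : Er a p r ω = (pP p σ.1 * aP a σ.1 ^ r)
          * (pP p ζ * aP a ζ ^ r * qP p ω.2) := by
        rw [Er, ← hζ, Ctx.pP_append, Ctx.aP_append,
          Real.mul_rpow (le_of_lt haσ0) (le_of_lt haζ0)]
        ring
      have e2 : Er a p r σ = (pP p σ.1 * aP a σ.1 ^ r) * qP p σ.2 := by
        rw [Er]; ring
      have hC : 0 < pP p σ.1 * aP a σ.1 ^ r := by
        have := hc.pP_pos σ.1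
        have : (0:ℝ) < aP a σ.1 ^ r := Real.rpow_pos_of_pos haσ0 r
        positivity
      have h1 : etaLo a b p r * qP p σ.2 < pP p ζ * aP a ζ ^ r * qP p ω.2 := by
        have h0 : etaLo a b p r * Er a p r σ
            = (pP p σ.1 * aP a σ.1 ^ r) * (etaLo a b p r * qP p σ.2) := by
          rw [e2]; ring
        have hEgt' := hEgt
        rw [h0, e1] at hEgt'
        exact (mul_lt_mul_iff_of_pos_left hC).mp hEgt'
      have h2 : pP p ζ ≤ qP p (ζ.map Sigma.fst) := hc.pP_le_qP ζ
      have hζrpos : (0:ℝ) < aP a ζ ^ r := Real.rpow_pos_of_pos haζ0 r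
      have hqω2 : 0 < qP p ω.2 := hc.qP_pos ω.2
      have hqζy : 0 < qP p (ζ.map Sigma.fst) := hc.qP_pos _
      have h3 : pP p ζ * aP a ζ ^ r * qP p ω.2
          ≤ aP a ζ ^ r * (qP p (ζ.map Sigma.fst) * qP p ω.2) := by
        calc pP p ζ * aP a ζ ^ r * qP p ω.2
            = pP p ζ * (aP a ζ ^ r * qP p ω.2) := by ring
        _ ≤ qP p (ζ.map Sigma.fst) * (aP a ζ ^ r * qP p ω.2) :=
              mul_le_mul_of_nonneg_right h2 (le_of_lt (mul_pos hζrpos hqω2))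
        _ = aP a ζ ^ r * (qP p (ζ.map Sigma.fst) * qP p ω.2) := by ring
      have h4 : aP a ζ ^ r * (qP p (ζ.map Sigma.fst) * qP p ω.2)
          ≤ aP a ζ ^ r * qP p σ.2 :=
        mul_le_mul_of_nonneg_left hqζω (le_of_lt hζrpos)
      have h5 : 0 < qP p σ.2 := hc.qP_pos σ.2
      have h9 : etaLo a b p r * qP p σ.2 < aP a ζ ^ r * qP p σ.2 :=
        lt_of_lt_of_le h1 (le_trans h3 h4)
      exact (mul_lt_mul_iff_of_pos_right h5).mp h9
    -- `D ≤ A5`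
    have hDA5 : (D : ℤ) ≤ A5 a b p r := by
      have hloga : Real.log (aHi a) < 0 := Real.log_neg hc.aHi_pos hc.aHi_lt_one
      have hcneg : r * Real.log (aHi a) < 0 := mul_neg_of_pos_of_neg hr hloga
      have h1 : Real.log (etaLo a b p r) < r * ((D:ℝ) * Real.log (aHi a)) := by
        have h2 : Real.log (etaLo a b p r) < Real.log (aP a ζ ^ r) :=
          Real.log_lt_log hη0 hζr
        rw [Real.log_rpow haζ0] at h2
        have h3 : Real.log (aP a ζ) ≤ Real.log (aHi a ^ D) :=
          Real.log_le_log haζ0 (by simpa [hDdef] using hc.aP_le_pow ζ)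
        rw [Real.log_pow] at h3
        have h3' : r * Real.log (aP a ζ) ≤ r * ((D:ℝ) * Real.log (aHi a)) :=
          mul_le_mul_of_nonneg_left h3 (le_of_lt hr)
        linarith
      have h4 : Real.log (qLo p ^ 2 * etaLo a b p r) / (r * Real.log (aHi a))
          < ((A5 a b p r : ℤ) : ℝ) + 1 := by
        rw [A5]
        exact Int.lt_floor_add_one _
      have h5 : (((A5 a b p r : ℤ) : ℝ) + 1) * (r * Real.log (aHi a))
          < Real.log (qLo p ^ 2 * etaLo a b p r) := by
        rw [div_lt_iff_of_neg hcneg] at h4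
        linarith
      have h6 : Real.log (qLo p ^ 2 * etaLo a b p r) ≤ Real.log (etaLo a b p r) := by
        have hq2 : qLo p ^ 2 ≤ 1 :=
          pow_le_one₀ (le_of_lt hc.qLo_pos) hc.qLo_le_one
        have : qLo p ^ 2 * etaLo a b p r ≤ etaLo a b p r :=
          mul_le_of_le_one_left (le_of_lt hη0) hq2
        have hq0 := hc.qLo_pos
        have he0 := hc.etaLo_pos
        exact Real.log_le_log (by positivity) this
      have h7 : (D : ℝ) < ((A5 a b p r : ℤ) : ℝ) + 1 := by
        by_contra hcon
        push_neg at hcon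
        have h8 : (D:ℝ) * (r * Real.log (aHi a))
            ≤ (((A5 a b p r : ℤ) : ℝ) + 1) * (r * Real.log (aHi a)) :=
          mul_le_mul_of_nonpos_right hcon (le_of_lt hcneg)
        have e9 : r * ((D:ℝ) * Real.log (aHi a))
            = (D:ℝ) * (r * Real.log (aHi a)) := by ring
        linarith
      have : (D : ℤ) < A5 a b p r + 1 := by exact_mod_cast h7
      omega
    -- the ancestor chain of `ω`
    set F := flatParent a b with hF
    have main : ∀ s, s ≤ L - 1 →
        (F^[s] ω) ∈ Psi a b (L - s) ∧ (F^[s] ω).1 = ω.1.take (L - s) ∧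
        sy (F^[s] ω) <+: sy ω ∧
        (1 ≤ s → etaLo a b p r ^ N ≤ Er a p r (F^[s] ω)) := by
      intro s
      induction s with
      | zero =>
        intro _
        refine ⟨by simpa using hωPsi, ?_, by simp, ?_⟩
        · simp only [Function.iterate_zero_apply, Nat.sub_zero]
          rw [← hωlen, List.take_length]
        · intro h; exact absurd h (by norm_num)
      | succ s ih =>
        intro hs
        have hsL : s ≤ L - 1 := by omega
        obtain ⟨hPsis, h1s, hpres, hEs⟩ := ih hsL
        have hlev2 : 2 ≤ L - s := by omega
        have hit : F^[s+1] ω = F (F^[s] ω) := Function.iterate_succ_apply' F s ω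
        obtain ⟨hρPsi, _, hρ1, hρpre, _, hErle, _⟩ := hc.fp_spec hlev2 hPsis
        refine ⟨?_, ?_, ?_, ?_⟩
        · rw [hit]
          have e : L - (s+1) = (L - s) - 1 := by omega
          rw [e]
          exact hρPsi
        · rw [hit, hρ1, h1s]
          have e1 : L - s ≤ ω.1.length := by omega
          rw [dropLast_take e1]
          have e2 : (L - s) - 1 = L - (s+1) := by omega
          rw [e2]
        · rw [hit]
          exact hρpre.trans hpres
        · intro _
          rcases Nat.eq_zero_or_pos s with rfl | hs1
          · rw [hit]
            have hρωeq : ρω = F (F^[0] ω) := by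
              simp only [Function.iterate_zero_apply]
              rw [hF]
              exact hc.fp_unique (by omega) hωPsi hρωflat
            rw [← hρωeq]
            exact hρωE
          · rw [hit]
            exact le_trans (hEs hs1) hErle
    -- level-`t` words with `K_t > L`, as prefixes of `sy ωb`
    have hsyω_take : ∀ t : ℕ, l ≤ t → t ≤ L →
        L + 1 ≤ (sy (F^[L - t] ω)).length →
        sy (F^[L - t] ω) = ω.1.map Sigma.fst
          ++ ω.2.take ((sy (F^[L - t] ω)).length - L) ∧
        (sy (F^[L - t] ω)).length - L ≤ ω.2.length ∧
        1 ≤ (sy (F^[L - t] ω)).length - L := by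
      intro t htl htL hKt
      have hsLt : L - t ≤ L - 1 := by omega
      obtain ⟨hPsit, h1t, hpret, _⟩ := main (L - t) hsLt
      have hKle : (sy (F^[L - t] ω)).length ≤ (sy ω).length := hpret.length_le
      have hsyωlen : (sy ω).length = L + ω.2.length := by
        rw [Ctx.sy_length, hωlen]
      refine ⟨?_, by omega, by omega⟩
      have h1 : sy (F^[L - t] ω) = (sy ω).take (sy (F^[L - t] ω)).length :=
        List.prefix_iff_eq_take.mp hpret
      have h2 : (sy (F^[L - t] ω)).length
          = (ω.1.map Sigma.fst).length + ((sy (F^[L - t] ω)).length - L) := by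
        simp only [List.length_map]
        rw [hωlen]
        omega
      conv_lhs => rw [h1, h2]
      exact List.take_length_add_append _
    -- Step C : at level `l` the `y`-length stays `≤ L`
    have hKl : (sy (F^[L - l] ω)).length ≤ L := by
      by_contra hcon
      push_neg at hcon
      have hKt : L + 1 ≤ (sy (F^[L - l] ω)).length := hcon
      obtain ⟨hYl, hu2, hu1⟩ := hsyω_take l (le_refl l) (by omega) hKt
      set u := (sy (F^[L - l] ω)).length - L with hu
      have hsLl : L - l ≤ L - 1 := by omega
      obtain ⟨hPsil, h1l, hprel, hEl⟩ := main (L - l) hsLl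
      have hLl : L - (L - l) = l := by omega
      rw [hLl] at hPsil h1l
      have hAncl1 : (F^[L - l] ω).1 = σ.1 := by
        rw [h1l, ← hζ, List.take_append_of_le_length (by rw [hσlen]),
          ← hσlen, List.take_length]
      obtain ⟨_, hl2A, hupA, hlowA⟩ := hPsil
      rw [hAncl1] at hupA hlowA
      -- dropLast of the level-l word
      have htune : ω.2.take u ≠ [] := by
        intro h
        have : (ω.2.take u).length = 0 := by rw [h]; rfl
        rw [List.length_take] at this
        omega
      have hdl : (sy (F^[L - l] ω)).dropLast
          = ω.1.map Sigma.fst ++ ω.2.take (u - 1) := by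
        rw [hYl, dropLast_append' htune, dropLast_take hu2]
      -- b-products
      have hbZl : bP b (ω.1.map Sigma.fst ++ ([j0, j0] ++ ω.2.take u))
          = bP b (sy (F^[L - l] ω)) * (b j0 * b j0) := by
        rw [Ctx.bP_append, Ctx.bP_append, hYl, Ctx.bP_append]
        simp [bP]; ring
      have hbZl' : bP b (ω.1.map Sigma.fst ++ ([j0, j0] ++ ω.2.take (u - 1)))
          = bP b (sy (F^[L - l] ω)).dropLast * (b j0 * b j0) := by
        rw [Ctx.bP_append, Ctx.bP_append, hdl, Ctx.bP_append]
        simp [bP]; ring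
      have hZlV := hZV u hu2
      have hZl'V := hZV (u - 1) (by omega)
      -- first window comparison
      have hc1 : bP b (ω.1.map Sigma.fst ++ ([j0, j0] ++ ω.2.take u))
          < bP b (σ.1.map Sigma.fst ++ ([j0, j0] ++ σ.2.dropLast)) := by
        rw [hbZl, hbXw']
        exact mul_lt_mul_of_pos_right (lt_of_lt_of_le hlowA hσPsi.2.2.1)
          (mul_pos hbj0 hbj0)
      have hlen1 := hc.length_lt_of_bP_lt hZlV hXw'V hc1
      -- second window comparison
      have hc2 : bP b (σ.1.map Sigma.fst ++ ([j0, j0] ++ σ.2))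
          < bP b (ω.1.map Sigma.fst ++ ([j0, j0] ++ ω.2.take (u - 1))) := by
        rw [hbXw, hbZl']
        exact mul_lt_mul_of_pos_right (lt_of_lt_of_le hσPsi.2.2.2 hupA)
          (mul_pos hbj0 hbj0)
      have hlen2 := hc.length_lt_of_bP_lt hXwV hZl'V hc2
      simp only [List.length_append, List.length_map, List.length_cons,
        List.length_take, List.length_dropLast] at hlen1 hlen2
      rw [hσlen, hωlen] at hlen1 hlen2
      -- equal lengths, so the two prefixes coincide
      have hZlXw : (ω.1.map Sigma.fst ++ ([j0, j0] ++ ω.2.take u))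
          = (σ.1.map Sigma.fst ++ ([j0, j0] ++ σ.2)) := by
        apply List.IsPrefix.eq_of_length
          (List.prefix_of_prefix_length_le hZlV hXwV ?_)
        · simp only [List.length_append, List.length_map, List.length_cons,
            List.length_take]
          rw [hσlen, hωlen]
          omega
        · simp only [List.length_append, List.length_map, List.length_cons,
            List.length_take]
          rw [hσlen, hωlen]
          omega
      -- extract the q-product identity
      have hqAncl : qP p (ζ.map Sigma.fst) * qP p (ω.2.take u) = qP p σ.2 := by
        have e0 : σ.1.map Sigma.fst ++ (ζ.map Sigma.fst ++ ([j0, j0] ++ ω.2.take u))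
            = σ.1.map Sigma.fst ++ ([j0, j0] ++ σ.2) := by
          rw [← List.append_assoc, ← List.map_append, hζ]
          exact hZlXw
        have e1 : ζ.map Sigma.fst ++ ([j0, j0] ++ ω.2.take u) = [j0, j0] ++ σ.2 :=
          List.append_cancel_left e0
        have e2 : qP p (ζ.map Sigma.fst ++ ([j0, j0] ++ ω.2.take u))
            = qP p ([j0, j0] ++ σ.2) := by rw [e1]
        rw [Ctx.qP_append, Ctx.qP_append, Ctx.qP_append] at e2
        have hq0 : (0:ℝ) < qP p [j0, j0] := hc.qP_pos _
        have e3 : qP p [j0, j0] * (qP p (ζ.map Sigma.fst) * qP p (ω.2.take u))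
            = qP p [j0, j0] * qP p σ.2 := by
          rw [← e2]; ring
        exact mul_left_cancel₀ (ne_of_gt hq0) e3
      -- `Er` at level `l` equals `Er σ`
      have hAncl2 : (F^[L - l] ω).2 = ζ.map Sigma.fst ++ ω.2.take u := by
        have e0 : (F^[L - l] ω).1.map Sigma.fst ++ (F^[L - l] ω).2
            = σ.1.map Sigma.fst ++ (ζ.map Sigma.fst ++ ω.2.take u) := by
          calc (F^[L - l] ω).1.map Sigma.fst ++ (F^[L - l] ω).2
              = sy (F^[L - l] ω) := rfl
          _ = ω.1.map Sigma.fst ++ ω.2.take u := hYl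
          _ = σ.1.map Sigma.fst ++ (ζ.map Sigma.fst ++ ω.2.take u) := by
              rw [← hζ, List.map_append, List.append_assoc]
        rw [hAncl1] at e0
        exact List.append_cancel_left e0
      have hErAncl : Er a p r (F^[L - l] ω) = Er a p r σ := by
        rw [Er, Er, hAncl1, hAncl2, Ctx.qP_append, hqAncl]
      have hEl' := hEl (by omega)
      rw [hErAncl] at hEl'
      linarith
    -- Step D : find the first level `≥ l` whose `y`-length exceeds `L`
    have hex : ∃ t, l ≤ t ∧ t ≤ L ∧ L + 1 ≤ (sy (F^[L - t] ω)).length := by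
      refine ⟨L, by omega, le_refl L, ?_⟩
      simp only [Nat.sub_self, Function.iterate_zero_apply]
      rw [Ctx.sy_length, hωlen]
      have := hωPsi.2.1
      omega
    obtain ⟨t0, ⟨ht0l, ht0L, hKt0⟩, ht0min⟩ :
        ∃ t0, (l ≤ t0 ∧ t0 ≤ L ∧ L + 1 ≤ (sy (F^[L - t0] ω)).length) ∧
          ∀ t' < t0, ¬(l ≤ t' ∧ t' ≤ L ∧ L + 1 ≤ (sy (F^[L - t'] ω)).length) :=
      ⟨Nat.find hex, Nat.find_spec hex, fun t' ht' => Nat.find_min hex ht'⟩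
    have ht0l1 : l + 1 ≤ t0 := by
      rcases eq_or_lt_of_le ht0l with h | h
      · exfalso
        rw [← h] at hKt0
        omega
      · omega
    have hKt0m : (sy (F^[L - (t0 - 1)] ω)).length ≤ L := by
      by_contra hcon
      push_neg at hcon
      exact ht0min (t0 - 1) (by omega) ⟨by omega, by omega, by omega⟩
    -- step bound between levels t0-1 and t0
    have hstep : ((sy (F^[L - t0] ω)).length : ℤ)
        ≤ ((sy (F^[L - (t0 - 1)] ω)).length : ℤ) + A1 a b := by
      have hsLt : L - t0 ≤ L - 1 := by omega
      obtain ⟨hPsit, _, _, _⟩ := main (L - t0) hsLt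
      have hlev2 : 2 ≤ L - (L - t0) := by omega
      obtain ⟨_, _, _, _, hgrow, _, _⟩ := hc.fp_spec hlev2 hPsit
      have hit : F^[L - (t0 - 1)] ω = F (F^[L - t0] ω) := by
        have e : L - (t0 - 1) = (L - t0) + 1 := by omega
        rw [e]
        exact Function.iterate_succ_apply' F (L - t0) ω
      rw [hit]
      exact hgrow
    -- window at level t0
    obtain ⟨hYt0, hu2', hu1'⟩ := hsyω_take t0 (by omega) ht0L hKt0
    set u' := (sy (F^[L - t0] ω)).length - L with hu'
    have hsLt : L - t0 ≤ L - 1 := by omega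
    obtain ⟨hPsit, h1t, _, _⟩ := main (L - t0) hsLt
    have hLt0 : L - (L - t0) = t0 := by omega
    rw [hLt0] at hPsit h1t
    obtain ⟨_, _, _, hlowT⟩ := hPsit
    have haT : aP a (F^[L - t0] ω).1 ≤ aP a σ.1 := by
      rw [h1t]
      have e : ω.1.take t0 = σ.1 ++ ζ.take (t0 - l) := by
        rw [← hζ]
        have e2 : t0 = σ.1.length + (t0 - l) := by rw [hσlen]; omega
        conv_lhs => rw [e2]
        exact List.take_length_add_append _
      rw [e, Ctx.aP_append]
      exact mul_le_of_le_one_right (le_of_lt (hc.aP_pos σ.1)) (hc.aP_le_one _)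
    have hbZt : bP b (ω.1.map Sigma.fst ++ ([j0, j0] ++ ω.2.take u'))
        = bP b (sy (F^[L - t0] ω)) * (b j0 * b j0) := by
      rw [Ctx.bP_append, Ctx.bP_append, hYt0, Ctx.bP_append]
      simp [bP]; ring
    have hZtV := hZV u' hu2'
    have hc3 : bP b (ω.1.map Sigma.fst ++ ([j0, j0] ++ ω.2.take u'))
        < bP b (σ.1.map Sigma.fst ++ ([j0, j0] ++ σ.2.dropLast)) := by
      rw [hbZt, hbXw']
      exact mul_lt_mul_of_pos_right
        (lt_of_lt_of_le (lt_of_lt_of_le hlowT haT) hσPsi.2.2.1)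
        (mul_pos hbj0 hbj0)
    have hlen3 := hc.length_lt_of_bP_lt hZtV hXw'V hc3
    simp only [List.length_append, List.length_map, List.length_cons,
      List.length_take, List.length_dropLast] at hlen3
    rw [hσlen, hωlen] at hlen3
    -- final contradiction
    have hfin1 : (l : ℤ) + σ.2.length ≤ ((sy (F^[L - t0] ω)).length : ℤ) := by
      have : l + 2 + (σ.2.length - 1) < L + 2 + min u' ω.2.length := by omega
      omega
    have hfin2 : ((sy (F^[L - t0] ω)).length : ℤ) ≤ (L : ℤ) + A1 a b := by
      have : ((sy (F^[L - (t0 - 1)] ω)).length : ℤ) ≤ (L : ℤ) := by exact_mod_cast hKt0m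
      omega
    have hLD' : (L : ℤ) = (l : ℤ) + D := by exact_mod_cast hLD
    omega
  refine ⟨key, ?_⟩
  intro hVW
  rcases eq_or_lt_of_le hVW.length_le with heq | hlt
  · apply key
    have : sy ωb = sy σb := hVW.eq_of_length heq
    rw [this]
  · have h1 : sy ωb <+: (sy σb).dropLast := by
      have e : sy ωb = (sy σb).take (sy ωb).length := List.prefix_iff_eq_take.mp hVW
      rw [e, List.dropLast_eq_take]
      exact take_prefix_take (by omega)
    have h2 : bP b (sy σb).dropLast ≤ bP b (sy ωb) := hc.bP_le_of_prefix h1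
    have h3 : aP a σb.1 ≤ bP b (sy σb).dropLast := hσbPsi.2.2.1
    have h4 : bP b (sy ωb) < aP a ωb.1 := hωbPsi.2.2.2
    have h5 : aP a ωb.1 = aP a σb.1 * aP a ζ := by
      rw [hσb1, hωb1, ← hζ, Ctx.aP_append, Ctx.aP_append, Ctx.aP_append]
      ring
    have h6 : aP a ζ < 1 := hc.aP_lt_one hζne
    have h7 : 0 < aP a σb.1 := hc.aP_pos _
    have h8 : aP a σb.1 * aP a ζ < aP a σb.1 := mul_lt_of_lt_one_right h7 h6
    linarith

end

end LGQ
end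

section
/- (1) If σ, ω ∈ Φ^* satisfy σ_L ⪯ ω_L and σ_R, ω_R are comparable, then σ_R ⪯ ω_R. (2) For every pair σ, ω ∈ Φ^*, the cylinders satisfy: [σ] ∩ [ω] = ∅, or [σ] ⊆ [ω], or [ω] ⊆ [σ]. -/
open Filter MeasureTheory
open scoped BigOperators ENNReal NNReal Topology

namespace LGQ

noncomputable section

variable {m : ℕ} {n : Fin m → ℕ}

lemma aP_append' (a : Alph m n → ℝ) (u v : List (Alph m n)) :
    aP a (u ++ v) = aP a u * aP a v := by simp [aP]

lemma bP_append' (b : Fin m → ℝ) (u v : List (Fin m)) :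
    bP b (u ++ v) = bP b u * bP b v := by simp [bP]

lemma aP_pos' {a : Alph m n → ℝ} (ha : ∀ g, 0 < a g) (w : List (Alph m n)) :
    0 < aP a w := by
  induction w with
  | nil => simp [aP]
  | cons g w ih => simpa [aP] using mul_pos (ha g) (by simpa [aP] using ih)

lemma bP_pos' {b : Fin m → ℝ} (hb : ∀ j, 0 < b j) (t : List (Fin m)) :
    0 < bP b t := by
  induction t with
  | nil => simp [bP]
  | cons j t ih => simpa [bP] using mul_pos (hb j) (by simpa [bP] using ih)

lemma bP_le_one' {b : Fin m → ℝ} (hb : ∀ j, 0 < b j ∧ b j < 1) (t : List (Fin m)) :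
    bP b t ≤ 1 := by
  induction t with
  | nil => simp [bP]
  | cons j t ih =>
    have h1 := hb j
    have h2 : 0 < bP b t := bP_pos' (fun j => (hb j).1) t
    have : bP b (j :: t) = b j * bP b t := by simp [bP]
    rw [this]
    nlinarith [ih]

lemma aP_le_bP' {a : Alph m n → ℝ} {b : Fin m → ℝ}
    (hab : ∀ g : Alph m n, 0 < a g ∧ a g < b g.1 ∧ b g.1 < 1) (w : List (Alph m n)) :
    aP a w ≤ bP b (w.map Sigma.fst) := by
  induction w with
  | nil => simp [aP, bP]
  | cons g w ih =>
    have h1 := hab g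
    have h2 : 0 < aP a w := aP_pos' (fun g => (hab g).1) w
    have h3 : 0 < bP b (w.map Sigma.fst) := lt_of_lt_of_le h2 ih
    have ea : aP a (g :: w) = a g * aP a w := by simp [aP]
    have eb : bP b ((g :: w).map Sigma.fst) = b g.1 * bP b (w.map Sigma.fst) := by
      simp [bP]
    rw [ea, eb]
    nlinarith [ih]

/-- Key claim (1): for `σ, ω ∈ Ψ^*`, if `σ_L ⪯ ω_L` and `σ_R, ω_R` are comparable,
then `σ_R ⪯ ω_R`. -/
lemma key_claim {a : Alph m n → ℝ} {b : Fin m → ℝ}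
    (hab : ∀ g : Alph m n, 0 < a g ∧ a g < b g.1 ∧ b g.1 < 1)
    (hb : ∀ j, 0 < b j ∧ b j < 1)
    (σ ω : Wd m n) (hσ : σ ∈ PsiStar a b) (hω : ω ∈ PsiStar a b)
    (h1 : σ.1 <+: ω.1) (h2 : σ.2 <+: ω.2 ∨ ω.2 <+: σ.2) : σ.2 <+: ω.2 := by
  have ha : ∀ g : Alph m n, 0 < a g := fun g => (hab g).1
  have hb0 : ∀ j, 0 < b j := fun j => (hb j).1
  rcases h2 with h2 | h2
  · exact h2
  by_cases hlen : σ.2.length ≤ ω.2.length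
  · rw [h2.eq_of_length_le hlen]
  push_neg at hlen
  exfalso
  obtain ⟨l, -, -, hsR, hσU, hσL⟩ := hσ
  obtain ⟨l', -, -, hwR, hωU, hωL⟩ := hω
  obtain ⟨e, he⟩ := h1
  obtain ⟨f, hf⟩ := h2
  have hfne : f ≠ [] := by
    intro h
    subst h
    simp at hf
    rw [hf] at hlen
    exact lt_irrefl _ hlen
  -- abbrevations
  set A := bP b (σ.1.map Sigma.fst) with hA
  have hApos : 0 < A := bP_pos' hb0 _
  have hσ2ne : σ.2 ≠ [] := by
    intro h; rw [h] at hsR; simp at hsR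
  -- rewrite σ's upper bound
  have hdl : (sy σ).dropLast = σ.1.map Sigma.fst ++ σ.2.dropLast := by
    unfold sy
    exact List.dropLast_append_of_ne_nil hσ2ne
  rw [hdl, bP_append'] at hσU
  -- σ.2.dropLast = ω.2 ++ f.dropLast
  have hdl2 : σ.2.dropLast = ω.2 ++ f.dropLast := by
    rw [← hf]
    exact List.dropLast_append_of_ne_nil hfne
  rw [hdl2, bP_append'] at hσU
  -- so aP a σ.1 ≤ A * bP b ω.2
  have hfd1 : bP b f.dropLast ≤ 1 := bP_le_one' hb f.dropLast
  have hfd0 : 0 < bP b f.dropLast := bP_pos' hb0 _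
  have hw2pos : 0 < bP b ω.2 := bP_pos' hb0 _
  have k1 : aP a σ.1 ≤ A * bP b ω.2 := by
    calc aP a σ.1 ≤ A * (bP b ω.2 * bP b f.dropLast) := hσU
      _ ≤ A * (bP b ω.2 * 1) := by gcongr
      _ = A * bP b ω.2 := by ring
  -- rewrite ω's lower bound
  have hsyω : sy ω = σ.1.map Sigma.fst ++ (e.map Sigma.fst ++ ω.2) := by
    unfold sy
    rw [← he]
    simp
  rw [hsyω, bP_append', bP_append', ← he, aP_append'] at hωL
  have hepos : 0 < aP a e := aP_pos' ha e
  have hempos : 0 < bP b (e.map Sigma.fst) := bP_pos' hb0 _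
  have k2 : aP a e ≤ bP b (e.map Sigma.fst) := aP_le_bP' hab e
  -- combine: A * (bP e_y * bP ω.2) < aP σ.1 * aP e ≤ A * bP ω.2 * aP e
  nlinarith [mul_le_mul_of_nonneg_right k1 hepos.le,
    mul_le_mul_of_nonneg_left k2 (mul_pos hApos hw2pos).le]

lemma cyl_subset' {σ ω : Wd m n} (h1 : σ.1 <+: ω.1) (h2 : σ.2 <+: ω.2) :
    Cyl ω ⊆ Cyl σ := by
  rintro x ⟨hx1, hx2⟩
  refine ⟨fun i hi => ?_, fun i hi => ?_⟩
  · rw [hx1 i (hi.trans_le h1.length_le)]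
    simp only [List.get_eq_getElem]
    exact (h1.getElem hi).symm
  · rw [hx2 i (hi.trans_le h2.length_le)]
    simp only [List.get_eq_getElem]
    exact (h2.getElem hi).symm

lemma comparable_of_agree {α : Type*} (f : ℕ → α) (l₁ l₂ : List α)
    (h₁ : ∀ i (hi : i < l₁.length), f i = l₁.get ⟨i, hi⟩)
    (h₂ : ∀ i (hi : i < l₂.length), f i = l₂.get ⟨i, hi⟩) :
    l₁ <+: l₂ ∨ l₂ <+: l₁ := by
  have main : ∀ (u v : List α), u.length ≤ v.length →
      (∀ i (hi : i < u.length), f i = u.get ⟨i, hi⟩) →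
      (∀ i (hi : i < v.length), f i = v.get ⟨i, hi⟩) → u <+: v := by
    intro u v hlen hu hv
    rw [List.prefix_iff_eq_take]
    apply List.ext_get
    · simp [hlen]
    · intro i hi1 hi2
      have hiu : i < u.length := hi1
      have hiv : i < v.length := lt_of_lt_of_le hiu hlen
      rw [← hu i hiu]
      simp only [List.get_eq_getElem, List.getElem_take]
      exact hv i hiv
  rcases le_total l₁.length l₂.length with h | h
  · exact Or.inl (main l₁ l₂ h h₁ h₂)
  · exact Or.inr (main l₂ l₁ h h₂ h₁)

theorem stmt10
    (m : ℕ) (hm : 2 ≤ m) (n : Fin m → ℕ) (hn : ∀ j, 1 ≤ n j)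
    (a : Alph m n → ℝ) (b : Fin m → ℝ)
    (hab : ∀ g : Alph m n, 0 < a g ∧ a g < b g.1 ∧ b g.1 < 1)
    (σ ω : Wd m n) (hσ : σ ∈ PsiStar a b) (hω : ω ∈ PsiStar a b) :
    (σ.1 <+: ω.1 → (σ.2 <+: ω.2 ∨ ω.2 <+: σ.2) → σ.2 <+: ω.2) ∧
    (Cyl σ ∩ Cyl ω = ∅ ∨ Cyl σ ⊆ Cyl ω ∨ Cyl ω ⊆ Cyl σ) := by
  have hb : ∀ j, 0 < b j ∧ b j < 1 := by
    intro j
    have hj : 0 < n j := hn j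
    have := hab ⟨j, ⟨0, hj⟩⟩
    exact ⟨lt_trans this.1 this.2.1, this.2.2⟩
  constructor
  · intro h1 h2
    exact key_claim hab hb σ ω hσ hω h1 h2
  · rcases Set.eq_empty_or_nonempty (Cyl σ ∩ Cyl ω) with h | ⟨x, hxσ, hxω⟩
    · exact Or.inl h
    right
    have hc1 : σ.1 <+: ω.1 ∨ ω.1 <+: σ.1 :=
      comparable_of_agree x.1 σ.1 ω.1 hxσ.1 hxω.1
    have hc2 : σ.2 <+: ω.2 ∨ ω.2 <+: σ.2 :=
      comparable_of_agree x.2 σ.2 ω.2 hxσ.2 hxω.2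
    rcases hc1 with h1 | h1
    · right
      exact cyl_subset' h1 (key_claim hab hb σ ω hσ hω h1 hc2)
    · left
      exact cyl_subset' h1 (key_claim hab hb ω σ hω hσ h1 hc2.symm)

end

end LGQ
end
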